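/- arXiv:1103.4973 — 3 statements merged into one kernel-verified Lean document; each statement's English description precedes it below -/
import Mathlib

section
/- Let T be a stopping time for the birth–death chain with E[T] < ∞. Then E[X_T] = k + Σ_{n=1}^{∞} E[G_T^n](r_n − l_n), where G_T^n is the number of times m with 0 ≤ m ≤ T−1 and X_m = n. -/
open MeasureTheory Filter Topology Finset
open scoped ENNReal NNReal Classical

/-- Partial products `t_n = (l_1 ⋯ l_n)/(r_1 ⋯ r_n)`, with `t_0 = 1`. -/
noncomputable def tp (l r : ℕ → ℝ) (n : ℕ) : ℝ :=
  (∏ i ∈ Finset.Icc 1 n, l i) / (∏ i ∈ Finset.Icc 1 n, r i)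

/-- `x_n = Σ_{i=0}^{n-1} t_i`. -/
noncomputable def xp (l r : ℕ → ℝ) (n : ℕ) : ℝ :=
  ∑ i ∈ Finset.range n, tp l r i

/-- The natural filtration of the process `X` (σ-algebra generated by `X_0, …, X_m`). -/
def natFilt {Ω : Type*} (X : ℕ → Ω → ℕ) (m : ℕ) : MeasurableSpace Ω :=
  ⨆ i ∈ Finset.range (m + 1), MeasurableSpace.comap (X i) ⊤

/-- A birth–death chain on ℕ started at `k`, with up–probabilities `r n` and
down–probabilities `l n` for states `n ≥ 1`, and `0` absorbing.  The Markov
property is encoded by conditioning on arbitrary events of the natural filtration. -/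
structure IsBDChain {Ω : Type*} [MeasurableSpace Ω] (P : Measure Ω)
    (X : ℕ → Ω → ℕ) (k : ℕ) (l r : ℕ → ℝ) : Prop where
  isProb : IsProbabilityMeasure P
  one_le_k : 1 ≤ k
  l_pos : ∀ n, 1 ≤ n → 0 < l n
  r_pos : ∀ n, 1 ≤ n → 0 < r n
  lr_one : ∀ n, 1 ≤ n → l n + r n = 1
  meas : ∀ m, Measurable (X m)
  init : ∀ᵐ ω ∂P, X 0 ω = k
  absorb : ∀ᵐ ω ∂P, ∀ m, X m ω = 0 → X (m + 1) ω = 0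
  step_up : ∀ m n, 1 ≤ n → ∀ A : Set Ω, MeasurableSet[natFilt X m] A →
    P (A ∩ {ω | X m ω = n ∧ X (m + 1) ω = n + 1}) =
      ENNReal.ofReal (r n) * P (A ∩ {ω | X m ω = n})
  step_down : ∀ m n, 1 ≤ n → ∀ A : Set Ω, MeasurableSet[natFilt X m] A →
    P (A ∩ {ω | X m ω = n ∧ X (m + 1) ω = n - 1}) =
      ENNReal.ofReal (l n) * P (A ∩ {ω | X m ω = n})

/-- A (finite-valued) stopping time for the natural filtration of `X`. -/
def IsBDStop {Ω : Type*} (X : ℕ → Ω → ℕ) (T : Ω → ℕ) : Prop :=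
  ∀ m, MeasurableSet[natFilt X m] {ω | T ω = m}

/-- An extended-ℕ-valued stopping time for the natural filtration of `X`. -/
def IsBDStopE {Ω : Type*} (X : ℕ → Ω → ℕ) (T : Ω → ℕ∞) : Prop :=
  ∀ m : ℕ, MeasurableSet[natFilt X m] {ω | T ω = (m : ℕ∞)}

/-- First hitting time of the set `S ⊆ ℕ` by the path `m ↦ X m ω`, valued in `ℕ∞`. -/
noncomputable def hitTime {Ω : Type*} (X : ℕ → Ω → ℕ) (S : Set ℕ) (ω : Ω) : ℕ∞ :=
  sInf ((fun m : ℕ => (m : ℕ∞)) '' {m | X m ω ∈ S})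

/-- `T_∂`: the first hitting time of `0`, with value `∞` if `0` is never hit. -/
noncomputable def hit0 {Ω : Type*} (X : ℕ → Ω → ℕ) (ω : Ω) : ℕ∞ :=
  hitTime X {0} ω

/-- `G_T^n`: the number of times `m` with `0 ≤ m ≤ T-1` and `X_m = n` (finite `T`). -/
def count {Ω : Type*} (X : ℕ → Ω → ℕ) (n : ℕ) (T : Ω → ℕ) (ω : Ω) : ℕ :=
  ((Finset.range (T ω)).filter fun m => X m ω = n).card

/-- `G_τ^n` for an `ℕ∞`-valued time `τ`, valued in `ℝ≥0∞`. -/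
noncomputable def countE {Ω : Type*} (X : ℕ → Ω → ℕ) (n : ℕ) (τ : Ω → ℕ∞) (ω : Ω) : ℝ≥0∞ :=
  ∑' m : ℕ, if (m : ℕ∞) < τ ω ∧ X m ω = n then 1 else 0


/-- For a stopping time `T` with `E[T] < ∞`,
`E[X_T] = k + Σ_{n=1}^∞ E[G_T^n] (r_n - l_n)`. -/
theorem stmt3 {Ω : Type*} [MeasurableSpace Ω] (P : Measure Ω) (X : ℕ → Ω → ℕ)
    (k : ℕ) (l r : ℕ → ℝ) (hC : IsBDChain P X k l r)
    (T : Ω → ℕ) (hstop : IsBDStop X T)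
    (hint : ∫⁻ ω, (T ω : ℝ≥0∞) ∂P < ⊤) :
    ∫ ω, (X (T ω) ω : ℝ) ∂P =
      k + ∑' n : ℕ, (∫ ω, (count X (n + 1) T ω : ℝ) ∂P) * (r (n + 1) - l (n + 1)) := by
  classical
  have hP : IsProbabilityMeasure P := hC.isProb
  -- the natural filtration is below the ambient σ-algebra
  have hle : ∀ m, natFilt X m ≤ ‹MeasurableSpace Ω› := by
    intro m
    exact iSup₂_le fun i _ => (hC.meas i).comap_le
  have hmono : ∀ {j m : ℕ}, j ≤ m → natFilt X j ≤ natFilt X m := by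
    intro j m hjm
    exact iSup₂_le fun i hi => le_iSup₂_of_le i
      (Finset.mem_range.mpr (lt_of_lt_of_le (Finset.mem_range.mp hi) (by omega))) le_rfl
  have hXm : ∀ m (n : ℕ), MeasurableSet[natFilt X m] {ω | X m ω = n} := by
    intro m n
    have : MeasurableSet[MeasurableSpace.comap (X m) ⊤] {ω | X m ω = n} :=
      ⟨{n}, trivial, rfl⟩
    exact (le_iSup₂_of_le m (Finset.mem_range.mpr (by omega))
      (le_refl (MeasurableSpace.comap (X m) ⊤)) : _ ≤ natFilt X m) _ this
  have hXmA : ∀ m (n : ℕ), MeasurableSet {ω | X m ω = n} := fun m n => hle m _ (hXm m n)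
  have hTlt : ∀ m, MeasurableSet[natFilt X m] {ω | m < T ω} := by
    intro m
    have he : {ω | m < T ω} = (⋃ j ∈ Finset.range (m+1), {ω | T ω = j})ᶜ := by
      ext ω
      simp only [Set.mem_compl_iff, Set.mem_iUnion, Set.mem_setOf_eq, Finset.mem_range,
        not_exists]
      constructor
      · intro h j hj hT; omega
      · intro h; by_contra hc; exact h (T ω) (by omega) rfl
    rw [he]
    exact (MeasurableSet.biUnion (Finset.range (m+1)).countable_toSet
      fun j hj => hmono (by simp only [Finset.coe_range, Set.mem_Iio] at hj; omega) _ (hstop j)).compl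
  have hTltA : ∀ m, MeasurableSet {ω | m < T ω} := fun m => hle m _ (hTlt m)
  have hTmeas : Measurable T := measurable_to_countable' fun m => hle m _ (hstop m)
  -- step structure a.e.
  have hnull : ∀ m n, 1 ≤ n → ∀ᵐ ω ∂P, X m ω = n →
      (X (m+1) ω = n + 1 ∨ X (m+1) ω = n - 1) := by
    intro m n hn
    set s : Set Ω := {ω | X m ω = n} with hs_def
    set u : Set Ω := {ω | X m ω = n ∧ X (m+1) ω = n + 1} with hu_def
    set v : Set Ω := {ω | X m ω = n ∧ X (m+1) ω = n - 1} with hv_def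
    have hu : P u = ENNReal.ofReal (r n) * P s := by
      have := hC.step_up m n hn Set.univ MeasurableSet.univ
      simpa [Set.univ_inter] using this
    have hv : P v = ENNReal.ofReal (l n) * P s := by
      have := hC.step_down m n hn Set.univ MeasurableSet.univ
      simpa [Set.univ_inter] using this
    have hum : MeasurableSet u :=
      (hXmA m n).inter ((hC.meas (m+1)) (measurableSet_singleton (n+1)))
    have hvm : MeasurableSet v :=
      (hXmA m n).inter ((hC.meas (m+1)) (measurableSet_singleton (n-1)))
    have hdisj : Disjoint u v := by
      rw [Set.disjoint_left]
      rintro ω ⟨-, h1⟩ ⟨-, h2⟩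
      omega
    have huv : P (u ∪ v) = P s := by
      rw [measure_union hdisj hvm, hu, hv, ← add_mul, ← ENNReal.ofReal_add
        (le_of_lt (hC.r_pos n hn)) (le_of_lt (hC.l_pos n hn))]
      have : r n + l n = 1 := by have := hC.lr_one n hn; linarith
      rw [this, ENNReal.ofReal_one, one_mul]
    have hsub : u ∪ v ⊆ s := by
      rintro ω (⟨h1, -⟩ | ⟨h1, -⟩) <;> exact h1
    have hzero : P (s \ (u ∪ v)) = 0 := by
      rw [measure_diff hsub (hum.union hvm).nullMeasurableSet (measure_ne_top P _), huv]
      simp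
    rw [ae_iff]
    refine measure_mono_null (fun ω hω => ?_) hzero
    simp only [Set.mem_setOf_eq] at hω
    push_neg at hω
    refine ⟨hω.1, ?_⟩
    rintro (⟨-, h⟩ | ⟨-, h⟩)
    · exact hω.2.1 h
    · exact hω.2.2 h
  have hSt : ∀ᵐ ω ∂P, ∀ m, (X m ω = 0 ∧ X (m+1) ω = 0) ∨
      (1 ≤ X m ω ∧ (X (m+1) ω = X m ω + 1 ∨ X (m+1) ω + 1 = X m ω)) := by
    have h1 : ∀ᵐ ω ∂P, ∀ m (n : ℕ), X m ω = n + 1 →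
        (X (m+1) ω = (n+1) + 1 ∨ X (m+1) ω = (n+1) - 1) := by
      rw [ae_all_iff]
      intro m
      rw [ae_all_iff]
      intro n
      exact hnull m (n+1) (by omega)
    filter_upwards [h1, hC.absorb] with ω h1 h2
    intro m
    rcases Nat.eq_zero_or_pos (X m ω) with h | h
    · exact Or.inl ⟨h, h2 m h⟩
    · refine Or.inr ⟨h, ?_⟩
      obtain ⟨n, hn⟩ : ∃ n, X m ω = n + 1 := ⟨X m ω - 1, by omega⟩
      rcases h1 m n hn with h' | h'
      · left; omega
      · right; omega
  -- abbreviations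
  set d : ℕ → Ω → ℝ := fun m ω => (X (m+1) ω : ℝ) - (X m ω : ℝ) with hd_def
  set B : ℕ → ℕ → Set Ω := fun m n => {ω | m < T ω ∧ X m ω = n} with hB_def
  have hBmeas : ∀ m n, MeasurableSet (B m n) := fun m n => (hTltA m).inter (hXmA m n)
  have hdmeas : ∀ m, Measurable (d m) :=
    fun m => (measurable_from_top.comp (hC.meas (m+1))).sub
      (measurable_from_top.comp (hC.meas m))
  set g : ℕ → ℕ → Ω → ℝ := fun m n ω => if ω ∈ B m n then d m ω else 0 with hg_def
  set f : ℕ → Ω → ℝ := fun m ω => if m < T ω then d m ω else 0 with hf_def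
  have hgmeas : ∀ m n, Measurable (g m n) :=
    fun m n => Measurable.ite (hBmeas m n) (hdmeas m) measurable_const
  have hfmeas : ∀ m, Measurable (f m) :=
    fun m => Measurable.ite (hTltA m) (hdmeas m) measurable_const
  have hd1 : ∀ᵐ ω ∂P, ∀ m, |d m ω| ≤ 1 := by
    filter_upwards [hSt] with ω hω m
    have hdd : d m ω = (X (m+1) ω : ℝ) - (X m ω : ℝ) := rfl
    rcases hω m with ⟨h0, h1⟩ | ⟨h0, (h1 | h1)⟩
    · rw [hdd, h0, h1]; norm_num
    · rw [hdd, h1]; push_cast; rw [abs_of_nonneg] <;> linarith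
    · rw [hdd, ← h1]; push_cast; rw [abs_of_nonpos] <;> linarith
  -- measure bookkeeping
  have hBsum : ∀ m, ∑' n, P (B m n) = P {ω | m < T ω} := by
    intro m
    have hdisj : Pairwise (Function.onFun Disjoint (B m)) := by
      intro n n' hnn'
      rw [Function.onFun, Set.disjoint_left]
      rintro ω ⟨-, h1⟩ ⟨-, h2⟩
      exact hnn' (h1 ▸ h2 ▸ rfl)
    have hU : (⋃ n, B m n) = {ω | m < T ω} := by
      ext ω
      simp only [Set.mem_iUnion, hB_def, Set.mem_setOf_eq]
      constructor
      · rintro ⟨n, h, -⟩; exact h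
      · intro h; exact ⟨X m ω, h, rfl⟩
    rw [← hU]
    exact (measure_iUnion hdisj (hBmeas m)).symm
  have hTsum : ∑' m, P {ω | m < T ω} = ∫⁻ ω, (T ω : ℝ≥0∞) ∂P := by
    have h1 : ∀ ω, ∑' m, Set.indicator {ω' | m < T ω'} (fun _ => (1:ℝ≥0∞)) ω
        = (T ω : ℝ≥0∞) := by
      intro ω
      rw [tsum_eq_sum (s := Finset.range (T ω))
        (fun m hm => Set.indicator_of_notMem
          (by simp only [Finset.mem_range, not_lt] at hm; simpa using hm) _)]
      have he : ∀ m ∈ Finset.range (T ω),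
          Set.indicator {ω' | m < T ω'} (fun _ => (1:ℝ≥0∞)) ω = 1 :=
        fun m hm => Set.indicator_of_mem (show ω ∈ {ω' | m < T ω'} from Finset.mem_range.mp hm) _
      rw [Finset.sum_congr rfl he, Finset.sum_const, Finset.card_range, nsmul_eq_mul, mul_one]
    calc ∑' m, P {ω | m < T ω}
        = ∑' m, ∫⁻ ω, Set.indicator {ω' | m < T ω'} (fun _ => (1:ℝ≥0∞)) ω ∂P := by
          refine tsum_congr fun m => ?_
          rw [lintegral_indicator (hTltA m), setLIntegral_one]
      _ = ∫⁻ ω, ∑' m, Set.indicator {ω' | m < T ω'} (fun _ => (1:ℝ≥0∞)) ω ∂P :=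
          (lintegral_tsum fun m => ((measurable_const.indicator (hTltA m))).aemeasurable).symm
      _ = ∫⁻ ω, (T ω : ℝ≥0∞) ∂P := lintegral_congr h1
  have hbnd : ∀ (s : Set Ω), MeasurableSet s → ∀ (u : Ω → ℝ),
      (∀ᵐ ω ∂P, ‖u ω‖ ≤ Set.indicator s (fun _ => (1:ℝ)) ω) →
      ∫⁻ ω, ‖u ω‖₊ ∂P ≤ P s := by
    intro s hs u hu
    have hle2 : ∫⁻ ω, ‖u ω‖₊ ∂P ≤ ∫⁻ ω, Set.indicator s (fun _ => (1:ℝ≥0∞)) ω ∂P := by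
      refine lintegral_mono_ae ?_
      filter_upwards [hu] with ω hω
      by_cases hmem : ω ∈ s
      · rw [Set.indicator_of_mem hmem]
        rw [Set.indicator_of_mem hmem] at hω
        have h1 : ‖u ω‖₊ ≤ 1 := by
          rw [← NNReal.coe_le_coe]; simpa using hω
        exact_mod_cast h1
      · rw [Set.indicator_of_notMem hmem]
        rw [Set.indicator_of_notMem hmem] at hω
        have h0 : u ω = 0 := norm_eq_zero.mp (le_antisymm hω (norm_nonneg _))
        simp [h0]
    rwa [lintegral_indicator hs, setLIntegral_one] at hle2
  have hfbnd : ∀ m, ∫⁻ ω, ‖f m ω‖₊ ∂P ≤ P {ω | m < T ω} := by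
    intro m
    refine hbnd _ (hTltA m) _ ?_
    filter_upwards [hd1] with ω hω
    by_cases h : m < T ω
    · rw [Set.indicator_of_mem (show ω ∈ {ω' | m < T ω'} from h)]
      simp only [hf_def, if_pos h, Real.norm_eq_abs]
      exact hω m
    · rw [Set.indicator_of_notMem (show ω ∉ {ω' | m < T ω'} from h)]
      simp [hf_def, if_neg h]
  have hgbnd : ∀ m n, ∫⁻ ω, ‖g m n ω‖₊ ∂P ≤ P (B m n) := by
    intro m n
    refine hbnd _ (hBmeas m n) _ ?_
    filter_upwards [hd1] with ω hω
    by_cases h : ω ∈ B m n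
    · rw [Set.indicator_of_mem h]
      simp only [hg_def, if_pos h, Real.norm_eq_abs]
      exact hω m
    · rw [Set.indicator_of_notMem h]
      simp [hg_def, if_neg h]
  -- integral of g m 0 is zero
  have hg0 : ∀ m, ∫ ω, g m 0 ω ∂P = 0 := by
    intro m
    have hae : g m 0 =ᵐ[P] fun _ => (0:ℝ) := by
      filter_upwards [hSt] with ω hω
      simp only [hg_def]
      by_cases h : ω ∈ B m 0
      · rw [if_pos h]
        have h0 : X m ω = 0 := h.2
        rcases hω m with ⟨-, h1⟩ | ⟨h1, -⟩
        · show (X (m+1) ω : ℝ) - X m ω = 0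
          rw [h0, h1]; norm_num
        · omega
      · rw [if_neg h]
    rw [integral_congr_ae hae, integral_zero]
  have hgsucc : ∀ m n, ∫ ω, g m (n+1) ω ∂P =
      (r (n+1) - l (n+1)) * (P (B m (n+1))).toReal := by
    intro m n
    have hn : 1 ≤ n + 1 := by omega
    set sp : Set Ω := {ω | m < T ω} ∩ {ω | X m ω = n+1 ∧ X (m+1) ω = (n+1) + 1} with hsp
    set sm : Set Ω := {ω | m < T ω} ∩ {ω | X m ω = n+1 ∧ X (m+1) ω = (n+1) - 1} with hsm
    have hspm : MeasurableSet sp :=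
      (hTltA m).inter ((hXmA m (n+1)).inter (hC.meas (m+1) (measurableSet_singleton (n+2))))
    have hsmm : MeasurableSet sm :=
      (hTltA m).inter ((hXmA m (n+1)).inter (hC.meas (m+1) (measurableSet_singleton n)))
    have hBeq : {ω | m < T ω} ∩ {ω | X m ω = n+1} = B m (n+1) := by
      ext ω; simp [hB_def, Set.mem_setOf_eq]
    have hup : P sp = ENNReal.ofReal (r (n+1)) * P (B m (n+1)) := by
      have := hC.step_up m (n+1) hn {ω | m < T ω} (hTlt m)
      rwa [hBeq] at this
    have hdown : P sm = ENNReal.ofReal (l (n+1)) * P (B m (n+1)) := by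
      have := hC.step_down m (n+1) hn {ω | m < T ω} (hTlt m)
      rwa [hBeq] at this
    have hae : g m (n+1) =ᵐ[P] fun ω =>
        Set.indicator sp (fun _ => (1:ℝ)) ω - Set.indicator sm (fun _ => (1:ℝ)) ω := by
      filter_upwards [hSt] with ω hω
      by_cases h : ω ∈ B m (n+1)
      · obtain ⟨hT, hXn⟩ := h
        rcases hω m with ⟨h0, -⟩ | ⟨-, (h1 | h1)⟩
        · omega
        · have hmem : ω ∈ sp := ⟨hT, hXn, by omega⟩
          have hnmem : ω ∉ sm := by rintro ⟨-, -, h2⟩; omega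
          rw [Set.indicator_of_mem hmem, Set.indicator_of_notMem hnmem]
          simp only [hg_def]
          have hcc : ω ∈ B m (n+1) := ⟨hT, hXn⟩
          rw [if_pos hcc]
          show (X (m+1) ω : ℝ) - X m ω = 1 - 0
          rw [h1, hXn]; push_cast; ring
        · have hmem : ω ∈ sm := ⟨hT, hXn, by omega⟩
          have hnmem : ω ∉ sp := by rintro ⟨-, -, h2⟩; omega
          rw [Set.indicator_of_notMem hnmem, Set.indicator_of_mem hmem]
          simp only [hg_def]
          have hcc : ω ∈ B m (n+1) := ⟨hT, hXn⟩
          rw [if_pos hcc]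
          show (X (m+1) ω : ℝ) - X m ω = 0 - 1
          have hx : X (m+1) ω = n := by omega
          rw [hx, hXn]; push_cast; ring
      · have hnp : ω ∉ sp := fun hc => h ⟨hc.1, hc.2.1⟩
        have hnm : ω ∉ sm := fun hc => h ⟨hc.1, hc.2.1⟩
        rw [Set.indicator_of_notMem hnp, Set.indicator_of_notMem hnm]
        simp [hg_def, if_neg h]
    have hIp : Integrable (Set.indicator sp (fun _ => (1:ℝ))) P :=
      (integrable_const (1:ℝ)).indicator hspm
    have hIm : Integrable (Set.indicator sm (fun _ => (1:ℝ))) P :=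
      (integrable_const (1:ℝ)).indicator hsmm
    rw [integral_congr_ae hae, integral_sub hIp hIm]
    have hip : ∫ ω, Set.indicator sp (fun _ => (1:ℝ)) ω ∂P = (P sp).toReal := by
      exact integral_indicator_one hspm
    have him : ∫ ω, Set.indicator sm (fun _ => (1:ℝ)) ω ∂P = (P sm).toReal := by
      exact integral_indicator_one hsmm
    rw [hip, him, hup, hdown, ENNReal.toReal_mul, ENNReal.toReal_mul,
      ENNReal.toReal_ofReal (le_of_lt (hC.r_pos _ hn)),
      ENNReal.toReal_ofReal (le_of_lt (hC.l_pos _ hn))]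
    ring
  have hfg : ∀ m ω, f m ω = (∑' n, g m n ω) := by
    intro m ω
    rw [tsum_eq_single (X m ω)
      (fun b hb => show g m b ω = 0 from if_neg fun hc => hb hc.2.symm)]
    simp only [hg_def, hf_def]
    by_cases h : m < T ω
    · have hcc : ω ∈ B m (X m ω) := ⟨h, rfl⟩
      rw [if_pos h, if_pos hcc]
    · rw [if_neg h, if_neg (fun hc : ω ∈ B m (X m ω) => h hc.1)]
  have hfint : ∀ m, ∫ ω, f m ω ∂P = ∑' n, ∫ ω, g m n ω ∂P := by
    intro m
    have he : ∫ ω, f m ω ∂P = ∫ ω, ∑' n, g m n ω ∂P :=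
      integral_congr_ae (Eventually.of_forall fun ω => hfg m ω)
    rw [he]
    refine integral_tsum (fun n => (hgmeas m n).aestronglyMeasurable) ?_
    refine ne_of_lt (lt_of_le_of_lt (ENNReal.tsum_le_tsum fun n => hgbnd m n) ?_)
    rw [hBsum m]
    exact measure_lt_top P _
  have hrl : ∀ n : ℕ, |r (n+1) - l (n+1)| ≤ 1 := by
    intro n
    have h1 := hC.lr_one (n+1) (by omega)
    have h2 := hC.r_pos (n+1) (by omega)
    have h3 := hC.l_pos (n+1) (by omega)
    rw [abs_le]; constructor <;> linarith
  have hgle : ∀ m n, |∫ ω, g m n ω ∂P| ≤ (P (B m n)).toReal := by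
    intro m n
    cases n with
    | zero => rw [hg0 m]; simp
    | succ n =>
      rw [hgsucc m n, abs_mul, abs_of_nonneg ENNReal.toReal_nonneg]
      calc |r (n+1) - l (n+1)| * (P (B m (n+1))).toReal
          ≤ 1 * (P (B m (n+1))).toReal :=
            mul_le_mul_of_nonneg_right (hrl n) ENNReal.toReal_nonneg
        _ = _ := one_mul _
  have hPBsummable : ∀ m, Summable fun n => (P (B m n)).toReal := by
    intro m
    refine ENNReal.summable_toReal ?_
    rw [hBsum m]
    exact measure_ne_top P _
  have hgsummable : ∀ m, Summable fun n => ∫ ω, g m n ω ∂P := fun m =>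
    Summable.of_norm_bounded (hPBsummable m) fun n => by
      rw [Real.norm_eq_abs]; exact hgle m n
  have hfint' : ∀ m, ∫ ω, f m ω ∂P =
      ∑' n, (r (n+1) - l (n+1)) * (P (B m (n+1))).toReal := by
    intro m
    rw [hfint m, Summable.tsum_eq_zero_add (hgsummable m), hg0 m, zero_add]
    exact tsum_congr fun n => hgsucc m n
  -- telescoping
  have hfsum : ∀ ω, (∑' m, f m ω) = ∑ m ∈ Finset.range (T ω), d m ω := by
    intro ω
    rw [tsum_eq_sum (s := Finset.range (T ω))
      (fun m hm => show f m ω = 0 from if_neg (by simpa using hm))]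
    exact Finset.sum_congr rfl fun m hm =>
      show f m ω = d m ω from if_pos (Finset.mem_range.mp hm)
  have hXTmeas : Measurable fun ω => X (T ω) ω := by
    refine measurable_to_countable' fun j => ?_
    have he : (fun ω => X (T ω) ω) ⁻¹' {j} = ⋃ m, ({ω | T ω = m} ∩ {ω | X m ω = j}) := by
      ext ω
      simp only [Set.mem_preimage, Set.mem_singleton_iff, Set.mem_iUnion, Set.mem_inter_iff,
        Set.mem_setOf_eq]
      constructor
      · intro h; exact ⟨T ω, rfl, h⟩
      · rintro ⟨m, h1, h2⟩; rw [h1]; exact h2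
    rw [he]
    exact MeasurableSet.iUnion fun m => (hle m _ (hstop m)).inter (hXmA m j)
  have hXT : ∀ ω, (X (T ω) ω : ℝ) = (X 0 ω : ℝ) + ∑' m, f m ω := by
    intro ω
    have h2 : ∑ m ∈ Finset.range (T ω), d m ω = (X (T ω) ω : ℝ) - X 0 ω :=
      Finset.sum_range_sub (fun m => (X m ω : ℝ)) (T ω)
    rw [hfsum ω, h2]
    ring
  have hTint : Integrable (fun ω => (T ω : ℝ)) P := by
    constructor
    · exact (measurable_from_top.comp hTmeas).aestronglyMeasurable
    · show (∫⁻ ω, (‖(T ω : ℝ)‖₊ : ℝ≥0∞) ∂P) < ⊤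
      have heq : ∀ ω, ((‖(T ω : ℝ)‖₊ : ℝ≥0∞)) = (T ω : ℝ≥0∞) := by
        intro ω; simp
      rw [lintegral_congr heq]
      exact hint
  have hsumf_meas : Measurable fun ω => ∑' m, f m ω := by
    have he : (fun ω => ∑' m, f m ω) = fun ω => (X (T ω) ω : ℝ) - (X 0 ω : ℝ) := by
      funext ω
      have := hXT ω
      linarith
    rw [he]
    exact (measurable_from_top.comp hXTmeas).sub (measurable_from_top.comp (hC.meas 0))
  have hsumf_bdd : ∀ᵐ ω ∂P, ‖∑' m, f m ω‖ ≤ ‖(T ω : ℝ)‖ := by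
    filter_upwards [hd1] with ω hω
    rw [Real.norm_eq_abs, Real.norm_eq_abs,
      abs_of_nonneg (by positivity : (0:ℝ) ≤ (T ω : ℝ)), hfsum ω]
    calc |∑ m ∈ Finset.range (T ω), d m ω| ≤ ∑ m ∈ Finset.range (T ω), |d m ω| :=
        Finset.abs_sum_le_sum_abs _ _
      _ ≤ ∑ m ∈ Finset.range (T ω), 1 := Finset.sum_le_sum fun m _ => hω m
      _ = (T ω : ℝ) := by rw [Finset.sum_const, Finset.card_range, nsmul_eq_mul, mul_one]
  have hsumf_int : Integrable (fun ω => ∑' m, f m ω) P :=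
    Integrable.mono hTint hsumf_meas.aestronglyMeasurable hsumf_bdd
  have hX0int : Integrable (fun ω => (X 0 ω : ℝ)) P := by
    refine Integrable.congr (integrable_const (k:ℝ)) ?_
    filter_upwards [hC.init] with ω h
    rw [h]
  have hintX0 : ∫ ω, (X 0 ω : ℝ) ∂P = k := by
    rw [integral_congr_ae (g := fun _ => (k:ℝ))
      (by filter_upwards [hC.init] with ω h; rw [h]), integral_const]
    simp
  have hmain1 : ∫ ω, (X (T ω) ω : ℝ) ∂P = k + ∑' m, ∫ ω, f m ω ∂P := by
    have he : ∫ ω, (X (T ω) ω : ℝ) ∂P = ∫ ω, ((X 0 ω : ℝ) + ∑' m, f m ω) ∂P :=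
      integral_congr_ae (Eventually.of_forall fun ω => hXT ω)
    rw [he, integral_add hX0int hsumf_int, hintX0]
    congr 1
    refine integral_tsum (fun m => (hfmeas m).aestronglyMeasurable) ?_
    refine ne_of_lt (lt_of_le_of_lt (ENNReal.tsum_le_tsum fun m => hfbnd m) ?_)
    rw [hTsum]
    exact hint
  -- double sum manipulation
  have hFsummable : Summable (Function.uncurry fun m n =>
      (r (n+1) - l (n+1)) * (P (B m (n+1))).toReal) := by
    have hg2 : Summable fun p : ℕ × ℕ => (P (B p.1 (p.2+1))).toReal := by
      refine ENNReal.summable_toReal ?_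
      have he : ∑' p : ℕ × ℕ, P (B p.1 (p.2+1)) = ∑' m, ∑' n, P (B m (n+1)) :=
        ENNReal.tsum_prod (f := fun m n => P (B m (n+1)))
      rw [he]
      have hle2 : ∑' (m : ℕ), ∑' (n : ℕ), P (B m (n+1)) ≤ ∑' (m : ℕ), P {ω | m < T ω} :=
        ENNReal.tsum_le_tsum fun m => le_trans
          (Summable.tsum_le_tsum_of_inj (fun n : ℕ => n + 1) (add_left_injective 1)
            (fun c _ => zero_le) (fun n => le_rfl) ENNReal.summable ENNReal.summable)
          (le_of_eq (hBsum m))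
      exact ne_of_lt (lt_of_le_of_lt hle2 (by rw [hTsum]; exact hint))
    refine Summable.of_norm_bounded hg2 ?_
    rintro ⟨m, n⟩
    simp only [Function.uncurry]
    rw [Real.norm_eq_abs, abs_mul, abs_of_nonneg ENNReal.toReal_nonneg]
    calc |r (n+1) - l (n+1)| * (P (B m (n+1))).toReal
        ≤ 1 * (P (B m (n+1))).toReal :=
          mul_le_mul_of_nonneg_right (hrl n) ENNReal.toReal_nonneg
      _ = _ := one_mul _
  have hswap : ∑' (m : ℕ), ∑' (n : ℕ), (r (n+1) - l (n+1)) * (P (B m (n+1))).toReal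
      = ∑' (n : ℕ), ∑' (m : ℕ), (r (n+1) - l (n+1)) * (P (B m (n+1))).toReal :=
    (Summable.tsum_comm hFsummable).symm
  -- the count integral
  have hcount : ∀ n : ℕ, ∫ ω, (count X (n+1) T ω : ℝ) ∂P
      = ∑' m, (P (B m (n+1))).toReal := by
    intro n
    set c : Ω → ℝ≥0∞ := fun ω => (count X (n+1) T ω : ℝ≥0∞) with hc_def
    have hcrep : ∀ ω, c ω = ∑' m, Set.indicator (B m (n+1)) (fun _ => (1:ℝ≥0∞)) ω := by
      intro ω
      have h1 : count X (n+1) T ω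
          = ∑ m ∈ Finset.range (T ω), if X m ω = n + 1 then 1 else 0 :=
        Finset.card_filter _ _
      have h2 : c ω = ∑ m ∈ Finset.range (T ω),
          Set.indicator (B m (n+1)) (fun _ => (1:ℝ≥0∞)) ω := by
        simp only [hc_def]
        rw [h1, Nat.cast_sum]
        refine Finset.sum_congr rfl fun m hm => ?_
        by_cases h : X m ω = n + 1
        · have hcc : ω ∈ B m (n+1) := ⟨Finset.mem_range.mp hm, h⟩
          rw [if_pos h, Set.indicator_of_mem hcc]
          simp
        · rw [if_neg h, Set.indicator_of_notMem (fun hc => h hc.2)]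
          simp
      rw [h2]
      exact (tsum_eq_sum fun m hm => Set.indicator_of_notMem
        (fun hc => (by simpa using hm : ¬ m < T ω) hc.1) _).symm
    have hcmeas : Measurable c := by
      have he : c = fun ω => ∑' m, Set.indicator (B m (n+1)) (fun _ => (1:ℝ≥0∞)) ω :=
        funext hcrep
      rw [he]
      exact Measurable.ennreal_tsum fun m => measurable_const.indicator (hBmeas m (n+1))
    have hlint : ∫⁻ ω, c ω ∂P = ∑' m, P (B m (n+1)) := by
      rw [lintegral_congr hcrep, lintegral_tsum fun m =>
        (measurable_const.indicator (hBmeas m (n+1))).aemeasurable]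
      exact tsum_congr fun m => by
        rw [lintegral_indicator (hBmeas m (n+1)), setLIntegral_one]
    have hreal : ∫ ω, (count X (n+1) T ω : ℝ) ∂P = (∫⁻ ω, c ω ∂P).toReal := by
      rw [← integral_toReal hcmeas.aemeasurable
        (Eventually.of_forall fun ω => (by simp [hc_def] : c ω < ⊤))]
      refine integral_congr_ae (Eventually.of_forall fun ω => ?_)
      simp [hc_def]
    rw [hreal, hlint, ENNReal.tsum_toReal_eq fun m => measure_ne_top P _]
  -- final assembly
  rw [hmain1]
  congr 1
  calc ∑' m, ∫ ω, f m ω ∂P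
      = ∑' (m : ℕ), ∑' (n : ℕ), (r (n+1) - l (n+1)) * (P (B m (n+1))).toReal :=
        tsum_congr hfint'
    _ = ∑' (n : ℕ), ∑' (m : ℕ), (r (n+1) - l (n+1)) * (P (B m (n+1))).toReal := hswap
    _ = ∑' (n : ℕ), (∫ ω, (count X (n+1) T ω : ℝ) ∂P) * (r (n+1) - l (n+1)) := by
        refine tsum_congr fun n => ?_
        rw [tsum_mul_left, hcount n, mul_comm]
end

section
/- For every deterministic time m ≥ 0, E[X_m] − k = Σ_{n=1}^{∞} E[G_m^n](r_n − l_n), where G_m^n is the number of times m' with 0 ≤ m' ≤ m−1 and X_{m'} = n. -/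
open MeasureTheory Filter Topology Finset
open scoped ENNReal NNReal Classical

section BDHelpers

variable {Ω : Type*} [MeasurableSpace Ω] {P : Measure Ω} {X : ℕ → Ω → ℕ} {k : ℕ} {l r : ℕ → ℝ}

lemma BD.measSet (hC : IsBDChain P X k l r) (j n : ℕ) :
    MeasurableSet {ω | X j ω = n} :=
  hC.meas j (measurableSet_singleton n)

lemma BD.measUp (hC : IsBDChain P X k l r) (j n : ℕ) :
    MeasurableSet {ω | X j ω = n ∧ X (j + 1) ω = n + 1} := by
  have : {ω | X j ω = n ∧ X (j + 1) ω = n + 1}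
      = {ω | X j ω = n} ∩ {ω | X (j + 1) ω = n + 1} := rfl
  rw [this]
  exact (BD.measSet hC j n).inter (BD.measSet hC (j + 1) (n + 1))

lemma BD.measDown (hC : IsBDChain P X k l r) (j n : ℕ) :
    MeasurableSet {ω | X j ω = n ∧ X (j + 1) ω = n - 1} := by
  have : {ω | X j ω = n ∧ X (j + 1) ω = n - 1}
      = {ω | X j ω = n} ∩ {ω | X (j + 1) ω = n - 1} := rfl
  rw [this]
  exact (BD.measSet hC j n).inter (BD.measSet hC (j + 1) (n - 1))

lemma BD.up (hC : IsBDChain P X k l r) (j n : ℕ) (hn : 1 ≤ n) :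
    P {ω | X j ω = n ∧ X (j + 1) ω = n + 1} = ENNReal.ofReal (r n) * P {ω | X j ω = n} := by
  have := hC.step_up j n hn Set.univ MeasurableSet.univ
  simpa using this

lemma BD.down (hC : IsBDChain P X k l r) (j n : ℕ) (hn : 1 ≤ n) :
    P {ω | X j ω = n ∧ X (j + 1) ω = n - 1} = ENNReal.ofReal (l n) * P {ω | X j ω = n} := by
  have := hC.step_down j n hn Set.univ MeasurableSet.univ
  simpa using this

lemma BD.UD_subset {j n : ℕ} :
    {ω : Ω | X j ω = n ∧ X (j + 1) ω = n + 1} ∪ {ω | X j ω = n ∧ X (j + 1) ω = n - 1}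
      ⊆ {ω | X j ω = n} := by
  rintro ω (⟨h, _⟩ | ⟨h, _⟩) <;> exact h

lemma BD.UD_disjoint {j n : ℕ} (hn : 1 ≤ n) :
    Disjoint {ω : Ω | X j ω = n ∧ X (j + 1) ω = n + 1}
      {ω | X j ω = n ∧ X (j + 1) ω = n - 1} := by
  rw [Set.disjoint_left]
  rintro ω ⟨_, h1⟩ ⟨_, h2⟩
  rw [h1] at h2
  omega

lemma BD.UD_full (hC : IsBDChain P X k l r) (j n : ℕ) (hn : 1 ≤ n) :
    P ({ω | X j ω = n ∧ X (j + 1) ω = n + 1} ∪ {ω | X j ω = n ∧ X (j + 1) ω = n - 1})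
      = P {ω | X j ω = n} := by
  rw [measure_union (BD.UD_disjoint hn) (BD.measDown hC j n), BD.up hC j n hn,
    BD.down hC j n hn, ← add_mul, ← ENNReal.ofReal_add (hC.r_pos n hn).le (hC.l_pos n hn).le]
  have : r n + l n = 1 := by have := hC.lr_one n hn; linarith
  rw [this, ENNReal.ofReal_one, one_mul]

lemma BD.ae_step (hC : IsBDChain P X k l r) :
    ∀ᵐ ω ∂P, ∀ j n, 1 ≤ n → X j ω = n →
      X (j + 1) ω = n + 1 ∨ X (j + 1) ω = n - 1 := by
  haveI := hC.isProb
  rw [ae_all_iff]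
  intro j
  rw [ae_all_iff]
  intro n
  rcases Nat.eq_zero_or_pos n with hn | hn
  · filter_upwards with ω; omega
  have hmain : ∀ᵐ ω ∂P, X j ω = n → X (j + 1) ω = n + 1 ∨ X (j + 1) ω = n - 1 := by
    rw [ae_iff]
    have hz : P ({ω | X j ω = n} \
        ({ω | X j ω = n ∧ X (j + 1) ω = n + 1} ∪ {ω | X j ω = n ∧ X (j + 1) ω = n - 1})) = 0 := by
      rw [measure_diff BD.UD_subset
        (((BD.measUp hC j n).union (BD.measDown hC j n)).nullMeasurableSet)
        (measure_ne_top P _), BD.UD_full hC j n hn, tsub_self]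
    refine measure_mono_null ?_ hz
    intro ω hω
    have hω' : ¬(X j ω = n → X (j + 1) ω = n + 1 ∨ X (j + 1) ω = n - 1) := hω
    rw [Classical.not_imp] at hω'
    obtain ⟨h1, h2⟩ := hω'
    refine ⟨h1, ?_⟩
    rintro (⟨_, h⟩ | ⟨_, h⟩)
    · exact h2 (Or.inl h)
    · exact h2 (Or.inr h)
  filter_upwards [hmain] with ω h _
  exact h

lemma BD.ae_bound (hC : IsBDChain P X k l r) :
    ∀ᵐ ω ∂P, ∀ j, X j ω ≤ k + j := by
  filter_upwards [hC.init, hC.absorb, BD.ae_step hC] with ω h0 habs hstep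
  intro j
  induction j with
  | zero => omega
  | succ j ih =>
    rcases Nat.eq_zero_or_pos (X j ω) with h | h
    · have := habs j h; omega
    · rcases hstep j (X j ω) h rfl with h' | h' <;> omega

lemma BD.integrable (hC : IsBDChain P X k l r) (j : ℕ) :
    Integrable (fun ω => (X j ω : ℝ)) P := by
  haveI := hC.isProb
  refine Integrable.mono' (integrable_const ((k + j : ℕ) : ℝ))
    (Measurable.aestronglyMeasurable (measurable_from_top.comp (hC.meas j))) ?_
  filter_upwards [BD.ae_bound hC] with ω hω
  rw [Real.norm_of_nonneg (by positivity)]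
  exact_mod_cast hω j

/-- Key one-step identity. -/
lemma BD.key (hC : IsBDChain P X k l r) (j : ℕ) :
    (∫ ω, (X (j + 1) ω : ℝ) ∂P) - ∫ ω, (X j ω : ℝ) ∂P =
      ∑' n : ℕ, (P {ω | X j ω = n + 1}).toReal * (r (n + 1) - l (n + 1)) := by
  haveI := hC.isProb
  have hfi : Integrable (fun ω => (X (j + 1) ω : ℝ) - X j ω) P :=
    (BD.integrable hC (j + 1)).sub (BD.integrable hC j)
  have hL : (∫ ω, (X (j + 1) ω : ℝ) ∂P) - ∫ ω, (X j ω : ℝ) ∂P =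
      ∫ ω, ((X (j + 1) ω : ℝ) - X j ω) ∂P :=
    (integral_sub (BD.integrable hC (j + 1)) (BD.integrable hC j)).symm
  have hunion : (⋃ n : ℕ, {ω : Ω | X j ω = n}) = Set.univ := by
    ext ω
    simp only [Set.mem_iUnion, Set.mem_setOf_eq, Set.mem_univ, iff_true]
    exact ⟨X j ω, rfl⟩
  have hdisj : Pairwise (Function.onFun Disjoint fun n : ℕ => {ω : Ω | X j ω = n}) := by
    intro a b hab
    rw [Function.onFun, Set.disjoint_left]
    rintro ω ha hb
    exact hab (ha ▸ hb ▸ rfl)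
  have hsum : HasSum (fun n : ℕ => ∫ ω in {ω : Ω | X j ω = n}, ((X (j + 1) ω : ℝ) - X j ω) ∂P)
      (∫ ω, ((X (j + 1) ω : ℝ) - X j ω) ∂P) := by
    have := MeasureTheory.hasSum_integral_iUnion (μ := P)
      (f := fun ω => (X (j + 1) ω : ℝ) - X j ω)
      (fun n : ℕ => BD.measSet hC j n) hdisj
      (by rw [hunion]; exact hfi.integrableOn)
    rwa [hunion, Measure.restrict_univ] at this
  have hzero : (∫ ω in {ω : Ω | X j ω = 0}, ((X (j + 1) ω : ℝ) - X j ω) ∂P) = 0 := by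
    rw [setIntegral_congr_ae (BD.measSet hC j 0) (g := fun _ => (0 : ℝ)) ?_, integral_const,
      smul_zero]
    filter_upwards [hC.absorb] with ω habs hω
    have h0 : X j ω = 0 := hω
    rw [h0, habs j h0]
    norm_num
  have hterm : ∀ n : ℕ, (∫ ω in {ω : Ω | X j ω = n + 1}, ((X (j + 1) ω : ℝ) - X j ω) ∂P) =
      (P {ω | X j ω = n + 1}).toReal * (r (n + 1) - l (n + 1)) := by
    intro n
    have hn1 : 1 ≤ n + 1 := by omega
    have haeeq : {ω : Ω | X j ω = n + 1} =ᵐ[P]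
        (({ω : Ω | X j ω = n + 1 ∧ X (j + 1) ω = n + 1 + 1} ∪
          {ω : Ω | X j ω = n + 1 ∧ X (j + 1) ω = n + 1 - 1} : Set Ω)) := by
      rw [MeasureTheory.ae_eq_set]
      constructor
      · rw [measure_diff BD.UD_subset
          (((BD.measUp hC j (n + 1)).union (BD.measDown hC j (n + 1))).nullMeasurableSet)
          (measure_ne_top P _), BD.UD_full hC j (n + 1) hn1, tsub_self]
      · rw [Set.diff_eq_empty.mpr BD.UD_subset, measure_empty]
    rw [setIntegral_congr_set haeeq,
      setIntegral_union (BD.UD_disjoint hn1) (BD.measDown hC j (n + 1))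
        hfi.integrableOn hfi.integrableOn]
    have h1 : (∫ ω in {ω : Ω | X j ω = n + 1 ∧ X (j + 1) ω = n + 1 + 1},
        ((X (j + 1) ω : ℝ) - X j ω) ∂P) =
        (P {ω : Ω | X j ω = n + 1 ∧ X (j + 1) ω = n + 1 + 1}).toReal := by
      rw [setIntegral_congr_fun (BD.measUp hC j (n + 1)) (g := fun _ => (1 : ℝ)) ?_,
        setIntegral_const, Measure.real, smul_eq_mul, mul_one]
      rintro ω ⟨ha, hb⟩
      show ((X (j + 1) ω : ℝ) - X j ω) = 1
      rw [ha, hb]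
      push_cast
      ring
    have h2 : (∫ ω in {ω : Ω | X j ω = n + 1 ∧ X (j + 1) ω = n + 1 - 1},
        ((X (j + 1) ω : ℝ) - X j ω) ∂P) =
        -(P {ω : Ω | X j ω = n + 1 ∧ X (j + 1) ω = n + 1 - 1}).toReal := by
      rw [setIntegral_congr_fun (BD.measDown hC j (n + 1)) (g := fun _ => (-1 : ℝ)) ?_,
        setIntegral_const, Measure.real, smul_eq_mul, mul_neg_one]
      rintro ω ⟨ha, hb⟩
      have hb' : X (j + 1) ω = n := by omega
      show ((X (j + 1) ω : ℝ) - X j ω) = -1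
      rw [ha, hb']
      push_cast
      ring
    rw [h1, h2, BD.up hC j (n + 1) hn1, BD.down hC j (n + 1) hn1,
      ENNReal.toReal_mul, ENNReal.toReal_mul,
      ENNReal.toReal_ofReal (hC.r_pos (n + 1) hn1).le,
      ENNReal.toReal_ofReal (hC.l_pos (n + 1) hn1).le]
    ring
  rw [hL, ← hsum.tsum_eq, Summable.tsum_eq_zero_add hsum.summable, hzero, zero_add]
  exact tsum_congr hterm

lemma BD.summable_p (hC : IsBDChain P X k l r) (j : ℕ) :
    Summable (fun n : ℕ => (P {ω | X j ω = n + 1}).toReal) := by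
  haveI := hC.isProb
  have hdisj : Pairwise (Function.onFun Disjoint fun n : ℕ => {ω : Ω | X j ω = n}) := by
    intro a b hab
    rw [Function.onFun, Set.disjoint_left]
    rintro ω ha hb
    exact hab (ha ▸ hb ▸ rfl)
  have h : Summable (fun n : ℕ => (P {ω | X j ω = n}).toReal) := by
    apply ENNReal.summable_toReal
    rw [← measure_iUnion hdisj (fun n => BD.measSet hC j n)]
    exact measure_ne_top P _
  exact h.comp_injective (add_left_injective 1)

lemma BD.rl_abs (hC : IsBDChain P X k l r) (n : ℕ) (hn : 1 ≤ n) :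
    |r n - l n| ≤ 1 := by
  have h1 := hC.l_pos n hn
  have h2 := hC.r_pos n hn
  have h3 := hC.lr_one n hn
  rw [abs_le]; constructor <;> linarith

lemma BD.summable_term (hC : IsBDChain P X k l r) (j : ℕ) :
    Summable (fun n : ℕ => (P {ω | X j ω = n + 1}).toReal * (r (n + 1) - l (n + 1))) := by
  refine Summable.of_norm_bounded (BD.summable_p hC j) fun n => ?_
  rw [norm_mul, Real.norm_of_nonneg ENNReal.toReal_nonneg]
  calc (P {ω | X j ω = n + 1}).toReal * ‖r (n + 1) - l (n + 1)‖
      ≤ (P {ω | X j ω = n + 1}).toReal * 1 :=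
        mul_le_mul_of_nonneg_left (BD.rl_abs hC (n + 1) (by omega)) ENNReal.toReal_nonneg
    _ = _ := mul_one _

lemma BD.count_integral (hC : IsBDChain P X k l r) (m n : ℕ) :
    (∫ ω, (count X n (fun _ => m) ω : ℝ) ∂P) =
      ∑ j ∈ Finset.range m, (P {ω | X j ω = n}).toReal := by
  haveI := hC.isProb
  have hrw : ∀ ω : Ω, (count X n (fun _ => m) ω : ℝ) =
      ∑ j ∈ Finset.range m, Set.indicator {ω : Ω | X j ω = n} (fun _ => (1 : ℝ)) ω := by
    intro ω
    rw [count, Finset.card_filter]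
    push_cast
    refine Finset.sum_congr rfl fun j _ => ?_
    by_cases h : X j ω = n <;> simp [Set.indicator, h]
  simp_rw [hrw]
  rw [integral_finset_sum]
  · refine Finset.sum_congr rfl fun j _ => ?_
    rw [integral_indicator_const (1 : ℝ) (BD.measSet hC j n), Measure.real, smul_eq_mul, mul_one]
  · intro j _
    exact (integrable_const (1 : ℝ)).indicator (BD.measSet hC j n)

end BDHelpers


/-- For every deterministic time `m`,
`E[X_m] - k = Σ_{n=1}^∞ E[G_m^n] (r_n - l_n)`. -/
theorem stmt4 {Ω : Type*} [MeasurableSpace Ω] (P : Measure Ω) (X : ℕ → Ω → ℕ)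
    (k : ℕ) (l r : ℕ → ℝ) (hC : IsBDChain P X k l r) (m : ℕ) :
    ∫ ω, (X m ω : ℝ) ∂P - k =
      ∑' n : ℕ, (∫ ω, (count X (n + 1) (fun _ => m) ω : ℝ) ∂P) * (r (n + 1) - l (n + 1)) := by
  haveI := hC.isProb
  have h0 : (∫ ω, (X 0 ω : ℝ) ∂P) = (k : ℝ) := by
    rw [integral_congr_ae (g := fun _ => (k : ℝ)) ?_, integral_const, Measure.real, measure_univ,
      ENNReal.toReal_one, one_smul]
    filter_upwards [hC.init] with ω h
    rw [h]
  have htel : ∫ ω, (X m ω : ℝ) ∂P - k =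
      ∑ j ∈ Finset.range m, ((∫ ω, (X (j + 1) ω : ℝ) ∂P) - ∫ ω, (X j ω : ℝ) ∂P) := by
    rw [Finset.sum_range_sub (fun j => ∫ ω, (X j ω : ℝ) ∂P), h0]
  have hR : ∀ n : ℕ, (∫ ω, (count X (n + 1) (fun _ => m) ω : ℝ) ∂P) * (r (n + 1) - l (n + 1)) =
      ∑ j ∈ Finset.range m, (P {ω | X j ω = n + 1}).toReal * (r (n + 1) - l (n + 1)) := by
    intro n
    rw [BD.count_integral hC m (n + 1), Finset.sum_mul]
  rw [htel, tsum_congr hR, Summable.tsum_finsetSum (fun j _ => BD.summable_term hC j)]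
  exact Finset.sum_congr rfl fun j _ => BD.key hC j
end

section
/- If Σ_{n=0}^{∞} t_n < ∞, then the probability that the birth–death chain started at k ever hits 0 equals (Σ_{n=k}^{∞} t_n)/(Σ_{n=0}^{∞} t_n). -/
open MeasureTheory Filter Topology Finset
open scoped ENNReal NNReal Classical

set_option linter.unusedSectionVars false

section Basics
variable {l r : ℕ → ℝ}

lemma tp_succ (l r : ℕ → ℝ) (n : ℕ) (hr : r (n+1) ≠ 0) :
    tp l r (n+1) = tp l r n * (l (n+1) / r (n+1)) := by
  unfold tp
  rw [Finset.prod_Icc_succ_top (by omega), Finset.prod_Icc_succ_top (by omega)]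
  field_simp

lemma tp_pos (hl : ∀ n, 1 ≤ n → 0 < l n) (hr : ∀ n, 1 ≤ n → 0 < r n) (n : ℕ) :
    0 < tp l r n := by
  unfold tp
  apply div_pos <;> exact Finset.prod_pos (fun i hi => by
    have := Finset.mem_Icc.mp hi; first | exact hl i (by omega) | exact hr i (by omega))

lemma xp_succ (l r : ℕ → ℝ) (n : ℕ) : xp l r (n+1) = xp l r n + tp l r n := by
  unfold xp; rw [Finset.sum_range_succ]

lemma xp_zero (l r : ℕ → ℝ) : xp l r 0 = 0 := rfl

lemma xp_mono (hl : ∀ n, 1 ≤ n → 0 < l n) (hr : ∀ n, 1 ≤ n → 0 < r n) :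
    StrictMono (xp l r) := by
  apply strictMono_nat_of_lt_succ
  intro n
  rw [xp_succ]
  have := tp_pos hl hr n
  linarith

lemma xp_harmonic (hl : ∀ n, 1 ≤ n → 0 < l n) (hr : ∀ n, 1 ≤ n → 0 < r n)
    (hlr : ∀ n, 1 ≤ n → l n + r n = 1) (n : ℕ) (hn : 1 ≤ n) :
    r n * xp l r (n+1) + l n * xp l r (n-1) = xp l r n := by
  obtain ⟨j, rfl⟩ : ∃ j, n = j + 1 := ⟨n - 1, by omega⟩
  simp only [Nat.add_sub_cancel]
  have h1 : xp l r (j+1+1) = xp l r (j+1) + tp l r (j+1) := xp_succ l r (j+1)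
  have h2 : xp l r (j+1) = xp l r j + tp l r j := xp_succ l r j
  have h3 : tp l r (j+1) = tp l r j * (l (j+1) / r (j+1)) :=
    tp_succ l r j (ne_of_gt (hr _ (by omega)))
  have hrp := hr (j+1) (by omega)
  have hl1 : l (j+1) = 1 - r (j+1) := by have := hlr (j+1) (by omega); linarith
  rw [h1, h3, h2, hl1]
  field_simp
  ring

end Basics
section Filt
variable {Ω : Type*} [mΩ : MeasurableSpace Ω] (X : ℕ → Ω → ℕ)

lemma natFilt_le (hX : ∀ m, Measurable (X m)) (m : ℕ) : natFilt X m ≤ mΩ := by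
  apply iSup₂_le
  intro i _
  rw [← measurable_iff_comap_le]
  exact hX i

lemma natFilt_mono {m m' : ℕ} (h : m ≤ m') : natFilt X m ≤ natFilt X m' := by
  apply iSup₂_le
  intro i hi
  exact le_iSup₂ (f := fun i (_ : i ∈ Finset.range (m'+1)) => MeasurableSpace.comap (X i) ⊤)
    i (Finset.mem_range.mpr (by simp at hi; omega))

lemma meas_eq (m : ℕ) {i : ℕ} (hi : i ≤ m) (n : ℕ) :
    MeasurableSet[natFilt X m] {ω | X i ω = n} := by
  have h1 : MeasurableSpace.comap (X i) ⊤ ≤ natFilt X m :=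
    le_iSup₂ (f := fun i (_ : i ∈ Finset.range (m+1)) => MeasurableSpace.comap (X i) ⊤)
      i (Finset.mem_range.mpr (by omega))
  exact h1 _ ⟨{n}, trivial, rfl⟩

end Filt
/-- Good paths: start at `k`, absorbed at `0`, and move by `±1` from positive states. -/
def GoodBD {Ω : Type*} (X : ℕ → Ω → ℕ) (k : ℕ) (ω : Ω) : Prop :=
  X 0 ω = k ∧ ∀ m, (X m ω = 0 → X (m+1) ω = 0) ∧
    (1 ≤ X m ω → X (m+1) ω = X m ω + 1 ∨ X (m+1) ω = X m ω - 1)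

section Chain
variable {Ω : Type*} [mΩ : MeasurableSpace Ω] {P : Measure Ω} {X : ℕ → Ω → ℕ}
  {k : ℕ} {l r : ℕ → ℝ} (hC : IsBDChain P X k l r)

include hC

lemma bad_null (m n : ℕ) (hn : 1 ≤ n) :
    P {ω | X m ω = n ∧ ¬(X (m+1) ω = n + 1 ∨ X (m+1) ω = n - 1)} = 0 := by
  have hP := hC.isProb
  set A : Set Ω := {ω | X m ω = n} with hA
  set U : Set Ω := {ω | X m ω = n ∧ X (m+1) ω = n + 1} with hU
  set D : Set Ω := {ω | X m ω = n ∧ X (m+1) ω = n - 1} with hD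
  have hmA : MeasurableSet A := natFilt_le X hC.meas m _ (meas_eq X m le_rfl n)
  have hmU : MeasurableSet U := by
    have : U = A ∩ {ω | X (m+1) ω = n+1} := by ext ω; simp [hU, hA, Set.mem_setOf_eq]
    rw [this]
    exact hmA.inter (natFilt_le X hC.meas (m+1) _ (meas_eq X (m+1) le_rfl (n+1)))
  have hmD : MeasurableSet D := by
    have : D = A ∩ {ω | X (m+1) ω = n-1} := by ext ω; simp [hD, hA, Set.mem_setOf_eq]
    rw [this]
    exact hmA.inter (natFilt_le X hC.meas (m+1) _ (meas_eq X (m+1) le_rfl (n-1)))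
  have hup : P U = ENNReal.ofReal (r n) * P A := by
    have := hC.step_up m n hn Set.univ MeasurableSet.univ
    simpa [hU, hA] using this
  have hdn : P D = ENNReal.ofReal (l n) * P A := by
    have := hC.step_down m n hn Set.univ MeasurableSet.univ
    simpa [hD, hA] using this
  have hdisj : Disjoint U D := by
    rw [Set.disjoint_left]
    rintro ω ⟨-, h1⟩ ⟨-, h2⟩
    omega
  have hUD : P (U ∪ D) = P A := by
    rw [measure_union hdisj hmD, hup, hdn, ← add_mul, ← ENNReal.ofReal_add
      (le_of_lt (hC.r_pos n hn)) (le_of_lt (hC.l_pos n hn))]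
    have : r n + l n = 1 := by have := hC.lr_one n hn; linarith
    rw [this]
    simp
  have hsub : U ∪ D ⊆ A := by
    rintro ω (⟨h, -⟩ | ⟨h, -⟩) <;> exact h
  have hbad : {ω | X m ω = n ∧ ¬(X (m+1) ω = n + 1 ∨ X (m+1) ω = n - 1)}
      = A \ (U ∪ D) := by
    ext ω
    simp only [Set.mem_setOf_eq, Set.mem_diff, Set.mem_union, hA, hU, hD]
    tauto
  rw [hbad, measure_diff hsub (hmU.union hmD).nullMeasurableSet (measure_ne_top P _),
    hUD, tsub_self]

lemma good_ae : ∀ᵐ ω ∂P, GoodBD X k ω := by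
  have h1 := hC.init
  have h2 := hC.absorb
  have h3 : ∀ᵐ ω ∂P, ∀ m, 1 ≤ X m ω →
      X (m+1) ω = X m ω + 1 ∨ X (m+1) ω = X m ω - 1 := by
    rw [ae_all_iff]
    intro m
    rw [ae_iff]
    apply measure_mono_null (t := ⋃ n : ℕ,
      {ω | X m ω = n + 1 ∧ ¬(X (m+1) ω = (n+1) + 1 ∨ X (m+1) ω = (n+1) - 1)})
    · intro ω hω
      simp only [Set.mem_setOf_eq, not_forall] at hω
      obtain ⟨h1', h2'⟩ := hω
      exact Set.mem_iUnion.mpr ⟨X m ω - 1, by simp only [Set.mem_setOf_eq]; omega⟩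
    · exact measure_iUnion_null fun n => bad_null hC m (n+1) (by omega)
  filter_upwards [h1, h2, h3] with ω e1 e2 e3
  exact ⟨e1, fun m => ⟨e2 m, e3 m⟩⟩

end Chain
section Band
variable {Ω : Type*}

/-- Still strictly inside the band `[1, N-1]` up to time `m`. -/
def bandSet (X : ℕ → Ω → ℕ) (N m : ℕ) : Set Ω := {ω | ∀ i ≤ m, 1 ≤ X i ω ∧ X i ω < N}

/-- Exit through the top (reach `≥ N`) by time `m`, before hitting `0`. -/
def topSet (X : ℕ → Ω → ℕ) (N m : ℕ) : Set Ω :=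
  {ω | ∃ j ≤ m, N ≤ X j ω ∧ ∀ i < j, 1 ≤ X i ω ∧ X i ω < N}

/-- Exit through the bottom (hit `0`) by time `m`, before reaching `≥ N`. -/
def bdBotSet (X : ℕ → Ω → ℕ) (N m : ℕ) : Set Ω :=
  {ω | ∃ j ≤ m, X j ω = 0 ∧ ∀ i < j, 1 ≤ X i ω ∧ X i ω < N}

variable {X : ℕ → Ω → ℕ} {N m : ℕ}

lemma band_cover (ω : Ω) :
    ω ∈ bdBotSet X N m ∨ ω ∈ topSet X N m ∨ ω ∈ bandSet X N m := by
  by_cases h : ∀ i ≤ m, 1 ≤ X i ω ∧ X i ω < N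
  · exact Or.inr (Or.inr h)
  · push_neg at h
    have hex : ∃ j, j ≤ m ∧ ¬(1 ≤ X j ω ∧ X j ω < N) := by
      obtain ⟨i, hi, h2⟩ := h
      exact ⟨i, hi, fun hc => by have := h2 hc.1; omega⟩
    classical
    obtain ⟨hjm, hjv⟩ := Nat.find_spec hex
    set j := Nat.find hex with hj
    have hmin : ∀ i < j, 1 ≤ X i ω ∧ X i ω < N := by
      intro i hij
      have := Nat.find_min hex (hj ▸ hij)
      push_neg at this
      by_contra hc
      exact hc (this (by omega))
    by_cases h0 : X j ω = 0
    · exact Or.inl ⟨j, hjm, h0, hmin⟩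
    · refine Or.inr (Or.inl ⟨j, hjm, ?_, hmin⟩)
      by_cases hN : X j ω < N
      · exact absurd ⟨by omega, hN⟩ hjv
      · omega

lemma bot_top_disj (hN : 1 ≤ N) : Disjoint (bdBotSet X N m) (topSet X N m) := by
  rw [Set.disjoint_left]
  rintro ω ⟨j1, hj1, h01, hb1⟩ ⟨j2, hj2, h02, hb2⟩
  rcases lt_trichotomy j1 j2 with h | h | h
  · have := hb2 j1 h; omega
  · subst h; omega
  · have := hb1 j2 h; omega

lemma bot_band_disj : Disjoint (bdBotSet X N m) (bandSet X N m) := by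
  rw [Set.disjoint_left]
  rintro ω ⟨j1, hj1, h01, hb1⟩ hb
  simp only [bandSet, Set.mem_setOf_eq] at hb
  have := hb j1 hj1; omega

lemma top_band_disj : Disjoint (topSet X N m) (bandSet X N m) := by
  rw [Set.disjoint_left]
  rintro ω ⟨j1, hj1, h01, hb1⟩ hb
  have := hb j1 hj1; omega

lemma bandSet_antitone {m' : ℕ} (h : m ≤ m') : bandSet X N m' ⊆ bandSet X N m :=
  fun ω hω i hi => hω i (le_trans hi h)

lemma topSet_mono {m' : ℕ} (h : m ≤ m') : topSet X N m ⊆ topSet X N m' :=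
  fun ω ⟨j, hj, h1, h2⟩ => ⟨j, le_trans hj h, h1, h2⟩

lemma bdBotSet_mono {m' : ℕ} (h : m ≤ m') : bdBotSet X N m ⊆ bdBotSet X N m' :=
  fun ω ⟨j, hj, h1, h2⟩ => ⟨j, le_trans hj h, h1, h2⟩

lemma band_meas (X : ℕ → Ω → ℕ) (N m : ℕ) :
    MeasurableSet[natFilt X m] (bandSet X N m) := by
  have : bandSet X N m =
      ⋂ i ∈ Finset.range (m+1), ⋃ n ∈ Finset.Icc 1 (N-1), {ω | X i ω = n} := by
    ext ω
    simp only [bandSet, Set.mem_setOf_eq, Set.mem_iInter, Set.mem_iUnion,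
      Finset.mem_range, Finset.mem_Icc]
    constructor
    · intro h i hi
      have := h i (by omega)
      exact ⟨X i ω, ⟨by omega, by omega⟩, rfl⟩
    · intro h i hi
      obtain ⟨n, ⟨h1, h2⟩, h3⟩ := h i (by omega)
      omega
  rw [this]
  letI : MeasurableSpace Ω := natFilt X m
  refine MeasurableSet.iInter fun i => MeasurableSet.iInter fun hi =>
    MeasurableSet.iUnion fun n => MeasurableSet.iUnion fun hn =>
      meas_eq X m ?_ n
  simp only [Finset.mem_range] at hi
  omega

end Band
section Chain2
variable {Ω : Type*} [mΩ : MeasurableSpace Ω] {P : Measure Ω} {X : ℕ → Ω → ℕ}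
  {k : ℕ} {l r : ℕ → ℝ} (hC : IsBDChain P X k l r)

include hC

lemma P_congr_good {A B : Set Ω} (h : ∀ ω, GoodBD X k ω → (ω ∈ A ↔ ω ∈ B)) :
    P A = P B := by
  apply measure_congr
  rw [Filter.eventuallyEq_set]
  filter_upwards [good_ae hC] with ω hg
  exact h ω hg

lemma meas_band_inter (N m n : ℕ) :
    MeasurableSet (bandSet X N m ∩ {ω | X m ω = n}) :=
  (natFilt_le X hC.meas m _ (band_meas X N m)).inter
    (natFilt_le X hC.meas m _ (meas_eq X m le_rfl n))

lemma w_band_zero (N m : ℕ) {n : ℕ} (h : n = 0 ∨ N ≤ n) :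
    P (bandSet X N m ∩ {ω | X m ω = n}) = 0 := by
  convert measure_empty (μ := P)
  ext ω
  simp only [Set.mem_inter_iff, Set.mem_setOf_eq, Set.mem_empty_iff_false, iff_false]
  rintro ⟨hb, he⟩
  have := hb m le_rfl
  omega

lemma w_rec (N m n : ℕ) (hn : 1 ≤ n) (hnN : n < N) :
    P (bandSet X N (m+1) ∩ {ω | X (m+1) ω = n}) =
      ENNReal.ofReal (r (n-1)) * P (bandSet X N m ∩ {ω | X m ω = n-1}) +
      ENNReal.ofReal (l (n+1)) * P (bandSet X N m ∩ {ω | X m ω = n+1}) := by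
  have hsplit : P (bandSet X N (m+1) ∩ {ω | X (m+1) ω = n}) =
      P ((bandSet X N m ∩ {ω | X m ω = n-1 ∧ X (m+1) ω = n}) ∪
         (bandSet X N m ∩ {ω | X m ω = n+1 ∧ X (m+1) ω = n})) := by
    apply P_congr_good hC
    intro ω hg
    simp only [Set.mem_inter_iff, Set.mem_union, Set.mem_setOf_eq, bandSet]
    constructor
    · rintro ⟨hb, he⟩
      have hbm : ∀ i ≤ m, 1 ≤ X i ω ∧ X i ω < N := fun i hi => hb i (by omega)
      have hXm := hbm m le_rfl
      rcases (hg.2 m).2 (by omega) with h1 | h1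
      · exact Or.inl ⟨hbm, by omega, he⟩
      · exact Or.inr ⟨hbm, by omega, he⟩
    · rintro (⟨hb, hx, he⟩ | ⟨hb, hx, he⟩) <;>
      · refine ⟨?_, he⟩
        intro i hi
        rcases Nat.lt_or_ge i (m+1) with h | h
        · exact hb i (by omega)
        · have : i = m + 1 := by omega
          subst this
          rw [he]
          omega
  rw [hsplit]
  have hdisj : Disjoint (bandSet X N m ∩ {ω | X m ω = n-1 ∧ X (m+1) ω = n})
      (bandSet X N m ∩ {ω | X m ω = n+1 ∧ X (m+1) ω = n}) := by
    rw [Set.disjoint_left]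
    rintro ω ⟨-, h1, -⟩ ⟨-, h2, -⟩
    omega
  have hm2 : MeasurableSet (bandSet X N m ∩ {ω | X m ω = n+1 ∧ X (m+1) ω = n}) := by
    have : {ω | X m ω = n+1 ∧ X (m+1) ω = n} =
        {ω | X m ω = n+1} ∩ {ω | X (m+1) ω = n} := by ext ω; simp [Set.mem_setOf_eq]
    rw [this, ← Set.inter_assoc]
    exact (meas_band_inter hC N m (n+1)).inter
      (natFilt_le X hC.meas (m+1) _ (meas_eq X (m+1) le_rfl n))
  rw [measure_union hdisj hm2]
  congr 1
  · rcases Nat.lt_or_ge n 2 with h1 | h1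
    · -- n = 1 : both sides vanish
      have hn1 : n = 1 := by omega
      subst hn1
      have : bandSet X N m ∩ {ω | X m ω = 0 ∧ X (m+1) ω = 1} = ∅ := by
        ext ω
        simp only [Set.mem_inter_iff, Set.mem_setOf_eq, Set.mem_empty_iff_false, iff_false,
          bandSet]
        rintro ⟨hb, h0, -⟩
        have := hb m le_rfl
        omega
      rw [this, measure_empty, w_band_zero hC N m (Or.inl rfl), mul_zero]
    · have hst := hC.step_up m (n-1) (by omega) (bandSet X N m) (band_meas X N m)
      have hne : n - 1 + 1 = n := by omega
      rw [hne] at hst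
      exact hst
  · have hst := hC.step_down m (n+1) (by omega) (bandSet X N m) (band_meas X N m)
    have hne : n + 1 - 1 = n := by omega
    rw [hne] at hst
    exact hst

lemma top_rec (N m : ℕ) (hN : 2 ≤ N) :
    P (topSet X N (m+1)) =
      P (topSet X N m) +
      ENNReal.ofReal (r (N-1)) * P (bandSet X N m ∩ {ω | X m ω = N-1}) := by
  have hsplit : P (topSet X N (m+1)) =
      P (topSet X N m ∪
         (bandSet X N m ∩ {ω | X m ω = N-1 ∧ X (m+1) ω = N})) := by
    apply P_congr_good hC
    intro ω hg
    simp only [Set.mem_union, Set.mem_inter_iff, Set.mem_setOf_eq, topSet, bandSet]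
    constructor
    · rintro ⟨j, hj, hX, hb⟩
      rcases Nat.lt_or_ge j (m+1) with h | h
      · exact Or.inl ⟨j, by omega, hX, hb⟩
      · have hjm : j = m + 1 := by omega
        subst hjm
        have hbm : ∀ i ≤ m, 1 ≤ X i ω ∧ X i ω < N := fun i hi => hb i (by omega)
        have hXm := hbm m le_rfl
        rcases (hg.2 m).2 (by omega) with h1 | h1 <;>
          exact Or.inr ⟨hbm, by omega, by omega⟩
    · rintro (⟨j, hj, hX, hb⟩ | ⟨hb, hx, he⟩)
      · exact ⟨j, by omega, hX, hb⟩
      · exact ⟨m+1, le_rfl, by omega, fun i hi => hb i (by omega)⟩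
  rw [hsplit]
  have hdisj : Disjoint (topSet X N m)
      (bandSet X N m ∩ {ω | X m ω = N-1 ∧ X (m+1) ω = N}) := by
    have := top_band_disj (X := X) (N := N) (m := m)
    exact this.mono_right (Set.inter_subset_left)
  have hm2 : MeasurableSet (bandSet X N m ∩ {ω | X m ω = N-1 ∧ X (m+1) ω = N}) := by
    have : {ω | X m ω = N-1 ∧ X (m+1) ω = N} =
        {ω | X m ω = N-1} ∩ {ω | X (m+1) ω = N} := by ext ω; simp [Set.mem_setOf_eq]
    rw [this, ← Set.inter_assoc]
    exact (meas_band_inter hC N m (N-1)).inter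
      (natFilt_le X hC.meas (m+1) _ (meas_eq X (m+1) le_rfl N))
  rw [measure_union hdisj hm2]
  congr 1
  have hst := hC.step_up m (N-1) (by omega) (bandSet X N m) (band_meas X N m)
  have hne : N - 1 + 1 = N := by omega
  rw [hne] at hst
  exact hst

end Chain2
section Mart
variable {Ω : Type*} [mΩ : MeasurableSpace Ω] {P : Measure Ω} {X : ℕ → Ω → ℕ}
  {k : ℕ} {l r : ℕ → ℝ} (hC : IsBDChain P X k l r)

lemma xp_nonneg' (hl : ∀ n, 1 ≤ n → 0 < l n) (hr : ∀ n, 1 ≤ n → 0 < r n) (n : ℕ) :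
    0 ≤ xp l r n :=
  Finset.sum_nonneg fun i _ => le_of_lt (tp_pos hl hr i)

include hC

lemma harmonic_ofReal (n : ℕ) (hn : 1 ≤ n) :
    ENNReal.ofReal (xp l r n) =
      ENNReal.ofReal (r n) * ENNReal.ofReal (xp l r (n+1)) +
      ENNReal.ofReal (l n) * ENNReal.ofReal (xp l r (n-1)) := by
  rw [← ENNReal.ofReal_mul (le_of_lt (hC.r_pos n hn)),
      ← ENNReal.ofReal_mul (le_of_lt (hC.l_pos n hn)),
      ← ENNReal.ofReal_add
        (mul_nonneg (le_of_lt (hC.r_pos n hn)) (xp_nonneg' hC.l_pos hC.r_pos _))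
        (mul_nonneg (le_of_lt (hC.l_pos n hn)) (xp_nonneg' hC.l_pos hC.r_pos _)),
      xp_harmonic hC.l_pos hC.r_pos hC.lr_one n hn]

lemma mart_step (N m : ℕ) (hN2 : 2 ≤ N) :
    ENNReal.ofReal (xp l r N) * P (topSet X N (m+1)) +
      ∑ n ∈ Finset.range N,
        ENNReal.ofReal (xp l r n) * P (bandSet X N (m+1) ∩ {ω | X (m+1) ω = n}) =
    ENNReal.ofReal (xp l r N) * P (topSet X N m) +
      ∑ n ∈ Finset.range N,
        ENNReal.ofReal (xp l r n) * P (bandSet X N m ∩ {ω | X m ω = n}) := by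
  obtain ⟨M, rfl⟩ : ∃ M, N = M + 1 := ⟨N - 1, by omega⟩
  have hM1 : 1 ≤ M := by omega
  set a : ℕ → ℝ≥0∞ := fun n => ENNReal.ofReal (xp l r n) with ha
  set R : ℕ → ℝ≥0∞ := fun n => ENNReal.ofReal (r n) with hR
  set L : ℕ → ℝ≥0∞ := fun n => ENNReal.ofReal (l n) with hL
  set w : ℕ → ℝ≥0∞ := fun n => P (bandSet X (M+1) m ∩ {ω | X m ω = n}) with hw
  set w' : ℕ → ℝ≥0∞ := fun n => P (bandSet X (M+1) (m+1) ∩ {ω | X (m+1) ω = n}) with hw'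
  have ha0 : a 0 = 0 := by simp [ha, xp_zero]
  have hw0 : w 0 = 0 := w_band_zero hC (M+1) m (Or.inl rfl)
  have hwN : w (M+1) = 0 := w_band_zero hC (M+1) m (Or.inr le_rfl)
  -- rewrite the primed sum
  have h1 : ∑ n ∈ Finset.range (M+1), a n * w' n =
      ∑ n ∈ Finset.range (M+1),
        (a n * (R (n-1) * w (n-1)) + a n * (L (n+1) * w (n+1))) := by
    apply Finset.sum_congr rfl
    intro n hn
    rcases Nat.eq_zero_or_pos n with h0 | h0
    · subst h0; simp [ha0]
    · simp only [hw', hw, hR, hL]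
      rw [w_rec hC (M+1) m n h0 (Finset.mem_range.mp hn)]
      ring
  have h2 : ∑ n ∈ Finset.range (M+1),
        (a n * (R (n-1) * w (n-1)) + a n * (L (n+1) * w (n+1))) =
      (∑ n ∈ Finset.range (M+1), a n * (R (n-1) * w (n-1))) +
      (∑ n ∈ Finset.range (M+1), a n * (L (n+1) * w (n+1))) :=
    Finset.sum_add_distrib
  have h3 : ∑ n ∈ Finset.range (M+1), a n * (R (n-1) * w (n-1)) =
      ∑ i ∈ Finset.range M, a (i+1) * (R i * w i) := by
    rw [Finset.sum_range_succ' (fun n => a n * (R (n-1) * w (n-1))) M]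
    simp [ha0]
  have h4 : ∑ n ∈ Finset.range (M+1), a n * (L (n+1) * w (n+1)) =
      ∑ i ∈ Finset.range M, a (i+1) * (L (i+2) * w (i+2)) := by
    rw [Finset.sum_range_succ' (fun n => a n * (L (n+1) * w (n+1))) M]
    simp [ha0]
  -- absorb the top increment into the "R"-sum
  have h5 : a (M+1) * (R M * w M) + ∑ i ∈ Finset.range M, a (i+1) * (R i * w i) =
      ∑ i ∈ Finset.range M, a (i+2) * (R (i+1) * w (i+1)) := by
    have e1 : a (M+1) * (R M * w M) + ∑ i ∈ Finset.range M, a (i+1) * (R i * w i) =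
        ∑ j ∈ Finset.range (M+1), a (j+1) * (R j * w j) := by
      rw [Finset.sum_range_succ (fun j => a (j+1) * (R j * w j)) M]
      ring
    rw [e1, Finset.sum_range_succ' (fun j => a (j+1) * (R j * w j)) M]
    simp [hw0]
  have h6 : ∑ i ∈ Finset.range M, a (i+1) * (L (i+2) * w (i+2)) =
      ∑ i ∈ Finset.range M, a i * (L (i+1) * w (i+1)) := by
    have e1 : ∑ j ∈ Finset.range (M+1), a j * (L (j+1) * w (j+1)) =
        (∑ i ∈ Finset.range M, a (i+1) * (L (i+2) * w (i+2))) +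
          a 0 * (L 1 * w 1) :=
      Finset.sum_range_succ' (fun j => a j * (L (j+1) * w (j+1))) M
    have e2 : ∑ j ∈ Finset.range (M+1), a j * (L (j+1) * w (j+1)) =
        (∑ i ∈ Finset.range M, a i * (L (i+1) * w (i+1))) +
          a M * (L (M+1) * w (M+1)) :=
      Finset.sum_range_succ (fun j => a j * (L (j+1) * w (j+1))) M
    rw [ha0] at e1
    rw [hwN] at e2
    simp only [zero_mul, mul_zero, add_zero] at e1 e2
    rw [← e1, e2]
  have h7 : ∑ n ∈ Finset.range (M+1), a n * w n =
      ∑ i ∈ Finset.range M, a (i+1) * w (i+1) := by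
    rw [Finset.sum_range_succ' (fun n => a n * w n) M]
    simp [ha0]
  have h8 : ∀ i, a (i+1) * w (i+1) =
      a (i+2) * (R (i+1) * w (i+1)) + a i * (L (i+1) * w (i+1)) := by
    intro i
    have hh := harmonic_ofReal hC (i+1) (by omega)
    simp only [Nat.add_sub_cancel] at hh
    simp only [ha, hR, hL]
    rw [hh]
    ring
  have htop := top_rec hC (M+1) m hN2
  simp only [Nat.add_sub_cancel] at htop
  have htop' : P (topSet X (M+1) (m+1)) = P (topSet X (M+1) m) + R M * w M := htop
  show a (M+1) * P (topSet X (M+1) (m+1)) + ∑ n ∈ Finset.range (M+1), a n * w' n =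
       a (M+1) * P (topSet X (M+1) m) + ∑ n ∈ Finset.range (M+1), a n * w n
  rw [htop']
  calc a (M+1) * (P (topSet X (M+1) m) + R M * w M) +
        ∑ n ∈ Finset.range (M+1), a n * w' n
      = a (M+1) * P (topSet X (M+1) m) +
        (a (M+1) * (R M * w M) + ∑ n ∈ Finset.range (M+1), a n * w' n) := by ring
    _ = a (M+1) * P (topSet X (M+1) m) +
        ((a (M+1) * (R M * w M) + ∑ i ∈ Finset.range M, a (i+1) * (R i * w i)) +
          ∑ i ∈ Finset.range M, a i * (L (i+1) * w (i+1))) := by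
        rw [h1, h2, h3, h4, h6]; ring
    _ = a (M+1) * P (topSet X (M+1) m) +
        ∑ i ∈ Finset.range M,
          (a (i+2) * (R (i+1) * w (i+1)) + a i * (L (i+1) * w (i+1))) := by
        rw [h5, Finset.sum_add_distrib]
    _ = a (M+1) * P (topSet X (M+1) m) + ∑ n ∈ Finset.range (M+1), a n * w n := by
        rw [h7]
        congr 1
        exact Finset.sum_congr rfl fun i _ => (h8 i).symm

end Mart
/-- `i` consecutive forced "down (or already absorbed)" steps after time `m`,
starting inside the band. -/
def downRun {Ω : Type*} (X : ℕ → Ω → ℕ) (N m : ℕ) : ℕ → Set Ω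
  | 0 => bandSet X N m
  | (i+1) => downRun X N m i ∩
      {ω | X (m+i+1) ω + 1 = X (m+i) ω ∨ X (m+i+1) ω = 0}

section Decay
variable {Ω : Type*} [mΩ : MeasurableSpace Ω] {P : Measure Ω} {X : ℕ → Ω → ℕ}
  {k : ℕ} {l r : ℕ → ℝ} (hC : IsBDChain P X k l r)

lemma downRun_meas (N m : ℕ) (i : ℕ) :
    MeasurableSet[natFilt X (m+i)] (downRun X N m i) := by
  induction i with
  | zero => exact band_meas X N m
  | succ i ih =>
    apply MeasurableSet.inter
    · exact natFilt_mono X (by omega) _ ih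
    · have : {ω | X (m+i+1) ω + 1 = X (m+i) ω ∨ X (m+i+1) ω = 0} =
          (⋃ n : ℕ, {ω | X (m+i) ω = n+1} ∩ {ω | X (m+i+1) ω = n}) ∪
            {ω | X (m+i+1) ω = 0} := by
        ext ω
        simp only [Set.mem_setOf_eq, Set.mem_union, Set.mem_iUnion, Set.mem_inter_iff]
        constructor
        · rintro (h | h)
          · exact Or.inl ⟨X (m+i+1) ω, by omega, rfl⟩
          · exact Or.inr h
        · rintro (⟨n, h1, h2⟩ | h)
          · exact Or.inl (by omega)
          · exact Or.inr h
      rw [this]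
      letI : MeasurableSpace Ω := natFilt X (m+i+1)
      refine MeasurableSet.union (MeasurableSet.iUnion fun n => MeasurableSet.inter ?_ ?_) ?_
      · exact meas_eq X (m+i+1) (by omega) (n+1)
      · exact meas_eq X (m+i+1) le_rfl n
      · exact meas_eq X (m+i+1) le_rfl 0

lemma downRun_subset_band (N m i : ℕ) : downRun X N m i ⊆ bandSet X N m := by
  induction i with
  | zero => exact fun ω h => h
  | succ i ih => exact fun ω h => ih h.1

lemma downRun_state (N m : ℕ) (i : ℕ) {ω : Ω} (h : ω ∈ downRun X N m i) :
    X (m+i) ω + i < N ∨ X (m+i) ω = 0 := by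
  induction i with
  | zero =>
    have := h m le_rfl
    have h0 : X (m+0) ω = X m ω := rfl
    omega
  | succ i ih =>
    obtain ⟨h1, h2⟩ := h
    have := ih h1
    simp only [Set.mem_setOf_eq] at h2
    have h3 : X (m+(i+1)) ω = X (m+i+1) ω := rfl
    omega

include hC

lemma downRun_lb (N m : ℕ) (hN2 : 2 ≤ N) (c : ℝ) (hc0 : 0 < c) (hc1 : c ≤ 1)
    (hcl : ∀ n, 1 ≤ n → n < N → c ≤ l n) (i : ℕ) :
    ENNReal.ofReal c ^ i * P (bandSet X N m) ≤ P (downRun X N m i) := by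
  induction i with
  | zero => simp [downRun]
  | succ i ih =>
    have key : ENNReal.ofReal c * P (downRun X N m i) ≤ P (downRun X N m (i+1)) := by
      -- decompose along the value of `X (m+i)`
      have hEmeas : ∀ j : ℕ, MeasurableSet (downRun X N m j) := fun j =>
        natFilt_le X hC.meas (m+j) _ (downRun_meas N m j)
      have hparts : ∀ s : Set Ω, MeasurableSet s →
          P s = ∑' n : ℕ, P (s ∩ {ω | X (m+i) ω = n}) := by
        intro s hs
        rw [← measure_iUnion]
        · congr 1
          ext ω
          simp only [Set.mem_iUnion, Set.mem_inter_iff, Set.mem_setOf_eq]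
          exact ⟨fun h => ⟨X (m+i) ω, h, rfl⟩, fun ⟨n, h, _⟩ => h⟩
        · intro n n' hnn'
          simp only [Set.disjoint_left, Set.mem_inter_iff, Set.mem_setOf_eq]
          rintro ω ⟨-, h1⟩ ⟨-, h2⟩
          exact hnn' (by omega)
        · exact fun n => hs.inter (natFilt_le X hC.meas (m+i) _ (meas_eq X (m+i) le_rfl n))
      rw [hparts _ (hEmeas i), hparts _ (hEmeas (i+1))]
      rw [← ENNReal.tsum_mul_left]
      apply ENNReal.tsum_le_tsum
      intro n
      rcases Nat.eq_zero_or_pos n with rfl | hn1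
      · -- n = 0 : absorption
        have he : P (downRun X N m (i+1) ∩ {ω | X (m+i) ω = 0}) =
            P (downRun X N m i ∩ {ω | X (m+i) ω = 0}) := by
          apply P_congr_good hC
          intro ω hg
          simp only [downRun, Set.mem_inter_iff, Set.mem_setOf_eq]
          constructor
          · rintro ⟨⟨h1, -⟩, h2⟩; exact ⟨h1, h2⟩
          · rintro ⟨h1, h2⟩
            refine ⟨⟨h1, Or.inr ?_⟩, h2⟩
            have : X (m+i+1) ω = 0 := (hg.2 (m+i)).1 h2
            exact this
        rw [he]
        calc ENNReal.ofReal c * P (downRun X N m i ∩ {ω | X (m+i) ω = 0})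
            ≤ 1 * P (downRun X N m i ∩ {ω | X (m+i) ω = 0}) := by
              gcongr
              exact ENNReal.ofReal_le_one.mpr hc1
          _ = _ := by rw [one_mul]
      · rcases Nat.lt_or_ge n N with hnN | hnN
        · -- 1 ≤ n < N : a genuine down-step
          have hstep := hC.step_down (m+i) n hn1 (downRun X N m i) (downRun_meas N m i)
          have hincl : downRun X N m i ∩ {ω | X (m+i) ω = n ∧ X (m+i+1) ω = n - 1} ⊆
              downRun X N m (i+1) ∩ {ω | X (m+i) ω = n} := by
            rintro ω ⟨h1, h2, h3⟩
            exact ⟨⟨h1, Or.inl (by omega)⟩, h2⟩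
          calc ENNReal.ofReal c * P (downRun X N m i ∩ {ω | X (m+i) ω = n})
              ≤ ENNReal.ofReal (l n) * P (downRun X N m i ∩ {ω | X (m+i) ω = n}) := by
                gcongr
                exact hcl n hn1 hnN
            _ = P (downRun X N m i ∩ {ω | X (m+i) ω = n ∧ X (m+i+1) ω = n - 1}) :=
                hstep.symm
            _ ≤ P (downRun X N m (i+1) ∩ {ω | X (m+i) ω = n}) := measure_mono hincl
        · -- n ≥ N : impossible inside a down-run
          have : downRun X N m i ∩ {ω | X (m+i) ω = n} = ∅ := by
            ext ω
            simp only [Set.mem_inter_iff, Set.mem_setOf_eq, Set.mem_empty_iff_false, iff_false]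
            rintro ⟨h1, h2⟩
            have := downRun_state N m i h1
            omega
          rw [this, measure_empty, mul_zero]
          exact zero_le
    calc ENNReal.ofReal c ^ (i+1) * P (bandSet X N m)
        = ENNReal.ofReal c * (ENNReal.ofReal c ^ i * P (bandSet X N m)) := by ring
      _ ≤ ENNReal.ofReal c * P (downRun X N m i) := by gcongr
      _ ≤ P (downRun X N m (i+1)) := key

lemma band_decay_step (N m : ℕ) (hN2 : 2 ≤ N) (c : ℝ) (hc0 : 0 < c) (hc1 : c ≤ 1)
    (hcl : ∀ n, 1 ≤ n → n < N → c ≤ l n) :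
    P (bandSet X N (m + (N-1))) + ENNReal.ofReal c ^ (N-1) * P (bandSet X N m) ≤
      P (bandSet X N m) := by
  have h1 := downRun_lb hC N m hN2 c hc0 hc1 hcl (N-1)
  have hzero : downRun X N m (N-1) ⊆ {ω | X (m + (N-1)) ω = 0} := by
    intro ω h
    have := downRun_state N m (N-1) h
    simp only [Set.mem_setOf_eq]
    omega
  have hdisj : Disjoint (bandSet X N (m + (N-1))) (downRun X N m (N-1)) := by
    rw [Set.disjoint_left]
    intro ω h1' h2'
    have h3 := hzero h2'
    have := h1' (m + (N-1)) le_rfl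
    simp only [Set.mem_setOf_eq] at h3
    omega
  have hsub : bandSet X N (m + (N-1)) ∪ downRun X N m (N-1) ⊆ bandSet X N m := by
    apply Set.union_subset
    · exact bandSet_antitone (by omega)
    · exact downRun_subset_band N m (N-1)
  calc P (bandSet X N (m + (N-1))) + ENNReal.ofReal c ^ (N-1) * P (bandSet X N m)
      ≤ P (bandSet X N (m + (N-1))) + P (downRun X N m (N-1)) := by gcongr
    _ = P (bandSet X N (m + (N-1)) ∪ downRun X N m (N-1)) := by
        rw [measure_union hdisj (natFilt_le X hC.meas _ _ (downRun_meas N m (N-1)))]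
    _ ≤ P (bandSet X N m) := measure_mono hsub

end Decay
section Limits
variable {Ω : Type*} [mΩ : MeasurableSpace Ω] {P : Measure Ω} {X : ℕ → Ω → ℕ}
  {k : ℕ} {l r : ℕ → ℝ} (hC : IsBDChain P X k l r)

include hC

lemma band_inter_null (N : ℕ) (hN2 : 2 ≤ N) : P (⋂ m, bandSet X N m) = 0 := by
  haveI := hC.isProb
  have hne : (Finset.Icc 1 (N-1)).Nonempty := ⟨1, by simp; omega⟩
  set c : ℝ := (Finset.Icc 1 (N-1)).inf' hne l with hcdef
  have hc0 : 0 < c := by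
    rw [hcdef, Finset.lt_inf'_iff]
    intro i hi
    exact hC.l_pos i (by simp at hi; omega)
  have hc1' : c ≤ l 1 := Finset.inf'_le l (by simp; omega)
  have hl1 : l 1 < 1 := by
    have := hC.lr_one 1 le_rfl
    have := hC.r_pos 1 le_rfl
    linarith
  have hc1 : c ≤ 1 := by linarith
  have hcl : ∀ n, 1 ≤ n → n < N → c ≤ l n := fun n h1 h2 =>
    Finset.inf'_le l (by simp; omega)
  set ρ : ℝ := 1 - c ^ (N-1) with hρdef
  have hcp0 : 0 < c ^ (N-1) := pow_pos hc0 _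
  have hcp1 : c ^ (N-1) ≤ 1 := pow_le_one₀ hc0.le hc1
  have hρ0 : 0 ≤ ρ := by rw [hρdef]; linarith
  have hρ1 : ρ < 1 := by rw [hρdef]; linarith
  set q : ℕ → ℝ≥0∞ := fun j => P (bandSet X N (j * (N-1))) with hq
  have hstep : ∀ j, (q (j+1)).toReal ≤ ρ * (q j).toReal := by
    intro j
    have h := band_decay_step hC N (j * (N-1)) hN2 c hc0 hc1 hcl
    have hidx : j * (N-1) + (N-1) = (j+1) * (N-1) := by ring
    rw [hidx] at h
    have hfin : ∀ j', q j' ≠ ∞ := fun j' => measure_ne_top P _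
    have hpow : (ENNReal.ofReal c) ^ (N-1) = ENNReal.ofReal (c ^ (N-1)) :=
      (ENNReal.ofReal_pow hc0.le _).symm
    rw [hpow] at h
    have h2 : (q (j+1) + ENNReal.ofReal (c ^ (N-1)) * q j).toReal ≤ (q j).toReal :=
      ENNReal.toReal_mono (hfin j) h
    rw [ENNReal.toReal_add (hfin _) (ENNReal.mul_ne_top ENNReal.ofReal_ne_top (hfin _)),
      ENNReal.toReal_mul, ENNReal.toReal_ofReal hcp0.le] at h2
    rw [hρdef]
    nlinarith [ENNReal.toReal_nonneg (a := q j)]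
  have hbound : ∀ j, (q j).toReal ≤ ρ ^ j := by
    intro j
    induction j with
    | zero =>
      simp only [pow_zero]
      have : q 0 ≤ 1 := prob_le_one
      exact ENNReal.toReal_le_of_le_ofReal zero_le_one (by simpa using this)
    | succ j ih =>
      calc (q (j+1)).toReal ≤ ρ * (q j).toReal := hstep j
        _ ≤ ρ * ρ ^ j := by nlinarith [ENNReal.toReal_nonneg (a := q j)]
        _ = ρ ^ (j+1) := by ring
  have hmono : ∀ j, P (⋂ m, bandSet X N m) ≤ q j := fun j =>
    measure_mono (Set.iInter_subset _ _)
  have hto : (P (⋂ m, bandSet X N m)).toReal = 0 := by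
    have h1 : ∀ j, (P (⋂ m, bandSet X N m)).toReal ≤ ρ ^ j := fun j =>
      le_trans (ENNReal.toReal_mono (measure_ne_top P _) (hmono j)) (hbound j)
    have h2 : Tendsto (fun j : ℕ => ρ ^ j) atTop (𝓝 0) :=
      tendsto_pow_atTop_nhds_zero_of_lt_one hρ0 hρ1
    have h3 := ge_of_tendsto h2 (Filter.Eventually.of_forall h1)
    exact le_antisymm h3 ENNReal.toReal_nonneg
  rw [← ENNReal.ofReal_toReal (measure_ne_top P _), hto]
  simp

lemma mart_const (N : ℕ) (hkN : k < N) (m : ℕ) :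
    ENNReal.ofReal (xp l r N) * P (topSet X N m) +
      ∑ n ∈ Finset.range N,
        ENNReal.ofReal (xp l r n) * P (bandSet X N m ∩ {ω | X m ω = n}) =
      ENNReal.ofReal (xp l r k) := by
  haveI := hC.isProb
  have hk := hC.one_le_k
  induction m with
  | zero =>
    have htop : P (topSet X N 0) = 0 := by
      have : P (topSet X N 0) = P (∅ : Set Ω) := by
        apply P_congr_good hC
        intro ω hg
        simp only [Set.mem_empty_iff_false, iff_false, topSet, Set.mem_setOf_eq]
        rintro ⟨j, hj, hX, -⟩
        interval_cases j
        rw [hg.1] at hX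
        omega
      rw [this, measure_empty]
    have hw : ∀ n, P (bandSet X N 0 ∩ {ω | X 0 ω = n}) =
        if n = k then 1 else 0 := by
      intro n
      by_cases hn : n = k
      · subst hn
        have : P (bandSet X N 0 ∩ {ω | X 0 ω = n}) = P (Set.univ : Set Ω) := by
          apply P_congr_good hC
          intro ω hg
          simp only [Set.mem_univ, iff_true, Set.mem_inter_iff, Set.mem_setOf_eq, bandSet]
          constructor
          · intro i hi
            interval_cases i
            rw [hg.1]
            omega
          · exact hg.1
        rw [this, measure_univ, if_pos rfl]
      · have : P (bandSet X N 0 ∩ {ω | X 0 ω = n}) = P (∅ : Set Ω) := by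
          apply P_congr_good hC
          intro ω hg
          simp only [Set.mem_empty_iff_false, iff_false, Set.mem_inter_iff, Set.mem_setOf_eq]
          rintro ⟨-, hX⟩
          rw [hg.1] at hX
          exact hn hX.symm
        rw [this, measure_empty, if_neg hn]
    rw [htop, mul_zero, zero_add]
    rw [Finset.sum_congr rfl (fun n _ => by rw [hw n])]
    simp only [mul_ite, mul_one, mul_zero]
    rw [Finset.sum_ite_eq' (Finset.range N) k (fun n => ENNReal.ofReal (xp l r n)),
      if_pos (Finset.mem_range.mpr hkN)]
  | succ m ih =>
    rw [mart_step hC N m (by omega)]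
    exact ih

end Limits
section Limits2
variable {Ω : Type*} [mΩ : MeasurableSpace Ω] {P : Measure Ω} {X : ℕ → Ω → ℕ}
  {k : ℕ} {l r : ℕ → ℝ} (hC : IsBDChain P X k l r)

include hC

lemma topSet_measurable (N m : ℕ) : MeasurableSet (topSet X N m) := by
  have : topSet X N m = ⋃ j ∈ Finset.range (m+1),
      ((X j) ⁻¹' {x | N ≤ x} ∩ ⋂ i ∈ Finset.range j, (X i) ⁻¹' {x | 1 ≤ x ∧ x < N}) := by
    ext ω
    simp only [topSet, Set.mem_setOf_eq, Set.mem_iUnion, Finset.mem_range, Set.mem_inter_iff,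
      Set.mem_iInter, Set.mem_preimage]
    constructor
    · rintro ⟨j, hj, h1, h2⟩
      exact ⟨j, by omega, h1, fun i hi => h2 i (by omega)⟩
    · rintro ⟨j, hj, h1, h2⟩
      exact ⟨j, by omega, h1, fun i hi => h2 i (by omega)⟩
  rw [this]
  exact Finset.measurableSet_biUnion _ fun j _ =>
    ((hC.meas j) trivial).inter
      (Finset.measurableSet_biInter _ fun i _ => (hC.meas i) trivial)

lemma bdBotSet_measurable (N m : ℕ) : MeasurableSet (bdBotSet X N m) := by
  have : bdBotSet X N m = ⋃ j ∈ Finset.range (m+1),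
      ((X j) ⁻¹' {0} ∩ ⋂ i ∈ Finset.range j, (X i) ⁻¹' {x | 1 ≤ x ∧ x < N}) := by
    ext ω
    simp only [bdBotSet, Set.mem_setOf_eq, Set.mem_iUnion, Finset.mem_range, Set.mem_inter_iff,
      Set.mem_iInter, Set.mem_preimage, Set.mem_singleton_iff]
    constructor
    · rintro ⟨j, hj, h1, h2⟩
      exact ⟨j, by omega, h1, fun i hi => h2 i (by omega)⟩
    · rintro ⟨j, hj, h1, h2⟩
      exact ⟨j, by omega, h1, fun i hi => h2 i (by omega)⟩
  rw [this]
  exact Finset.measurableSet_biUnion _ fun j _ =>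
    ((hC.meas j) trivial).inter
      (Finset.measurableSet_biInter _ fun i _ => (hC.meas i) trivial)

lemma top_union_prob (N : ℕ) (hkN : k < N) :
    ENNReal.ofReal (xp l r N) * P (⋃ m, topSet X N m) = ENNReal.ofReal (xp l r k) := by
  haveI := hC.isProb
  have hN2 : 2 ≤ N := by have := hC.one_le_k; omega
  have h1 : Tendsto (fun m => P (topSet X N m)) atTop (𝓝 (P (⋃ m, topSet X N m))) :=
    tendsto_measure_iUnion_atTop fun i j hij => topSet_mono hij
  have h2 : Tendsto (fun m => P (bandSet X N m)) atTop (𝓝 0) := by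
    have := tendsto_measure_iInter_atTop (μ := P) (s := fun m => bandSet X N m)
      (fun m => (natFilt_le X hC.meas m _ (band_meas X N m)).nullMeasurableSet)
      (fun i j hij => bandSet_antitone hij) ⟨0, measure_ne_top P _⟩
    rwa [band_inter_null hC N hN2] at this
  have h3 : ∀ n : ℕ, Tendsto
      (fun m => ENNReal.ofReal (xp l r n) * P (bandSet X N m ∩ {ω | X m ω = n}))
      atTop (𝓝 0) := by
    intro n
    have hub : Tendsto (fun m => ENNReal.ofReal (xp l r n) * P (bandSet X N m))
        atTop (𝓝 (ENNReal.ofReal (xp l r n) * 0)) :=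
      ENNReal.Tendsto.const_mul h2 (Or.inr ENNReal.ofReal_ne_top)
    rw [mul_zero] at hub
    apply tendsto_of_tendsto_of_tendsto_of_le_of_le tendsto_const_nhds hub
    · exact fun m => zero_le
    · exact fun m => mul_le_mul_right (measure_mono Set.inter_subset_left) _
  have h4 : Tendsto
      (fun m => ENNReal.ofReal (xp l r N) * P (topSet X N m) +
        ∑ n ∈ Finset.range N,
          ENNReal.ofReal (xp l r n) * P (bandSet X N m ∩ {ω | X m ω = n}))
      atTop (𝓝 (ENNReal.ofReal (xp l r N) * P (⋃ m, topSet X N m) +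
        ∑ n ∈ Finset.range N, (0:ℝ≥0∞))) :=
    (ENNReal.Tendsto.const_mul h1 (Or.inr ENNReal.ofReal_ne_top)).add
      (tendsto_finset_sum _ fun n _ => h3 n)
  have h5 : Tendsto
      (fun _ : ℕ => ENNReal.ofReal (xp l r k)) atTop
      (𝓝 (ENNReal.ofReal (xp l r k))) := tendsto_const_nhds
  have h6 := tendsto_nhds_unique
    (h4.congr fun m => (mart_const hC N hkN m)) h5
  simpa using h6

lemma bot_union_prob (N : ℕ) (hkN : k < N) :
    P (⋃ m, bdBotSet X N m) = ENNReal.ofReal (1 - xp l r k / xp l r N) := by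
  haveI := hC.isProb
  have hN2 : 2 ≤ N := by have := hC.one_le_k; omega
  set BI := ⋃ m, bdBotSet X N m with hBI
  set TI := ⋃ m, topSet X N m with hTI
  set CI := ⋂ m, bandSet X N m with hCI
  have hcov : BI ∪ (TI ∪ CI) = Set.univ := by
    ext ω
    simp only [Set.mem_univ, iff_true, Set.mem_union, hBI, hTI, hCI, Set.mem_iUnion,
      Set.mem_iInter]
    by_cases hc : ∀ m, ω ∈ bandSet X N m
    · exact Or.inr (Or.inr hc)
    · push_neg at hc
      obtain ⟨m, hm⟩ := hc
      rcases band_cover (X := X) (N := N) (m := m) ω with h | h | h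
      · exact Or.inl ⟨m, h⟩
      · exact Or.inr (Or.inl ⟨m, h⟩)
      · exact absurd h hm
  have hd1 : Disjoint BI TI := by
    rw [Set.disjoint_left]
    rintro ω hb ht
    simp only [hBI, hTI, Set.mem_iUnion] at hb ht
    obtain ⟨m1, hb⟩ := hb
    obtain ⟨m2, ht⟩ := ht
    exact Set.disjoint_left.mp (bot_top_disj (X := X) (N := N) (m := max m1 m2) (by omega))
      (bdBotSet_mono (le_max_left m1 m2) hb) (topSet_mono (le_max_right m1 m2) ht)
  have hd2 : Disjoint BI CI := by
    rw [Set.disjoint_left]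
    rintro ω hb hc
    simp only [hBI, Set.mem_iUnion] at hb
    obtain ⟨m1, hb⟩ := hb
    exact Set.disjoint_left.mp (bot_band_disj (X := X) (N := N) (m := m1)) hb
      (Set.mem_iInter.mp hc m1)
  have hd3 : Disjoint TI CI := by
    rw [Set.disjoint_left]
    rintro ω ht hc
    simp only [hTI, Set.mem_iUnion] at ht
    obtain ⟨m1, ht⟩ := ht
    exact Set.disjoint_left.mp (top_band_disj (X := X) (N := N) (m := m1)) ht
      (Set.mem_iInter.mp hc m1)
  have hmTI : MeasurableSet TI := MeasurableSet.iUnion fun m => topSet_measurable hC N m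
  have hmCI : MeasurableSet CI := MeasurableSet.iInter fun m =>
    natFilt_le X hC.meas m _ (band_meas X N m)
  have hsum : P BI + (P TI + P CI) = 1 := by
    rw [← measure_union hd3 hmCI, ← measure_union (Set.disjoint_union_right.mpr ⟨hd1, hd2⟩)
      (hmTI.union hmCI), hcov, measure_univ]
  rw [band_inter_null hC N hN2] at hsum
  have hxN : 0 < xp l r N := by
    have := xp_mono hC.l_pos hC.r_pos (show 0 < N by omega)
    rwa [xp_zero] at this
  have hPTI : P TI = ENNReal.ofReal (xp l r k / xp l r N) := by
    have hA0 : ENNReal.ofReal (xp l r N) ≠ 0 := by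
      simp only [ne_eq, ENNReal.ofReal_eq_zero, not_le]
      exact hxN
    have := top_union_prob hC N hkN
    rw [ENNReal.ofReal_div_of_pos hxN]
    rw [ENNReal.eq_div_iff hA0 ENNReal.ofReal_ne_top]
    exact this
  rw [hPTI, add_zero] at hsum
  have hq0 : 0 ≤ xp l r k / xp l r N :=
    div_nonneg (xp_nonneg' hC.l_pos hC.r_pos k) hxN.le
  rw [ENNReal.ofReal_sub 1 hq0, ENNReal.ofReal_one]
  exact ENNReal.eq_sub_of_add_eq (by simp [ENNReal.ofReal_ne_top]) hsum

end Limits2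
lemma bdBotSet_N_mono {Ω : Type*} {X : ℕ → Ω → ℕ} {N N' m : ℕ} (h : N ≤ N') :
    bdBotSet X N m ⊆ bdBotSet X N' m := by
  rintro ω ⟨j, hj, h0, hb⟩
  exact ⟨j, hj, h0, fun i hi => by have := hb i hi; omega⟩

/-- If `Σ_{n=0}^∞ t_n < ∞`, then the probability that the chain
started at `k` ever hits `0` equals `(Σ_{n=k}^∞ t_n)/(Σ_{n=0}^∞ t_n)`. -/
theorem stmt6 {Ω : Type*} [MeasurableSpace Ω] (P : Measure Ω) (X : ℕ → Ω → ℕ)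
    (k : ℕ) (l r : ℕ → ℝ) (hC : IsBDChain P X k l r)
    (hsum : Summable (tp l r)) :
    P {ω | ∃ m : ℕ, X m ω = 0} =
      ENNReal.ofReal ((∑' n : ℕ, tp l r (k + n)) / (∑' n : ℕ, tp l r n)) := by
  classical
  have hk := hC.one_le_k
  set S : ℝ := ∑' n : ℕ, tp l r n with hS
  have htp0 : tp l r 0 = 1 := by simp [tp]
  have hS0 : 0 < S := by
    have h1 : tp l r 0 ≤ S := Summable.le_tsum hsum 0 fun i _ => (tp_pos hC.l_pos hC.r_pos i).le
    rw [htp0] at h1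
    linarith
  -- the hitting event as a monotone union
  have hU : {ω | ∃ m : ℕ, X m ω = 0} = ⋃ j : ℕ, ⋃ m : ℕ, bdBotSet X (k+1+j) m := by
    ext ω
    simp only [Set.mem_setOf_eq, Set.mem_iUnion]
    constructor
    · rintro hex
      set j0 := Nat.find hex with hj0
      have hspec : X j0 ω = 0 := Nat.find_spec hex
      have hmin : ∀ i < j0, 1 ≤ X i ω := by
        intro i hi
        have := Nat.find_min hex (hj0 ▸ hi)
        omega
      set B := (Finset.range j0).sup (fun i => X i ω) with hB
      refine ⟨max (k+1) (B+1) - (k+1), j0, j0, le_rfl, hspec, ?_⟩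
      intro i hi
      have h1 := hmin i hi
      have h2 : X i ω ≤ B := Finset.le_sup (f := fun i => X i ω) (Finset.mem_range.mpr hi)
      constructor
      · exact h1
      · have : k + 1 + (max (k+1) (B+1) - (k+1)) = max (k+1) (B+1) := by omega
        omega
    · rintro ⟨j, m, j', hj', h0, -⟩
      exact ⟨j', h0⟩
  have hmono : Monotone (fun j : ℕ => ⋃ m : ℕ, bdBotSet X (k+1+j) m) := by
    intro j j' hjj'
    exact Set.iUnion_mono fun m => bdBotSet_N_mono (by omega)
  have hP : Tendsto (fun j => P (⋃ m : ℕ, bdBotSet X (k+1+j) m)) atTop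
      (𝓝 (P {ω | ∃ m : ℕ, X m ω = 0})) := by
    rw [hU]
    exact tendsto_measure_iUnion_atTop hmono
  -- identify each term
  have hterm : ∀ j : ℕ, P (⋃ m : ℕ, bdBotSet X (k+1+j) m) =
      ENNReal.ofReal (1 - xp l r k / xp l r (k+1+j)) := fun j =>
    bot_union_prob hC (k+1+j) (by omega)
  -- the real limit
  have hxlim : Tendsto (fun j : ℕ => xp l r (k+1+j)) atTop (𝓝 S) := by
    have h1 : Tendsto (fun n : ℕ => ∑ i ∈ Finset.range n, tp l r i) atTop (𝓝 S) :=
      hsum.hasSum.tendsto_sum_nat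
    have h2 : Tendsto (fun j : ℕ => j + (k+1)) atTop atTop := tendsto_add_atTop_nat (k+1)
    have h3 := h1.comp h2
    apply h3.congr
    intro j
    simp only [Function.comp_apply]
    rw [show j + (k+1) = k + 1 + j by omega]
    rfl
  have hreal : Tendsto (fun j : ℕ => 1 - xp l r k / xp l r (k+1+j)) atTop
      (𝓝 (1 - xp l r k / S)) := by
    have hd : Tendsto (fun j : ℕ => xp l r k / xp l r (k+1+j)) atTop
        (𝓝 (xp l r k / S)) := tendsto_const_nhds.div hxlim (ne_of_gt hS0)
    exact hd.const_sub 1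
  have hE : Tendsto (fun j : ℕ => ENNReal.ofReal (1 - xp l r k / xp l r (k+1+j))) atTop
      (𝓝 (ENNReal.ofReal (1 - xp l r k / S))) :=
    (ENNReal.continuous_ofReal.tendsto _).comp hreal
  have hfinal : P {ω | ∃ m : ℕ, X m ω = 0} = ENNReal.ofReal (1 - xp l r k / S) :=
    tendsto_nhds_unique (hP.congr fun j => (hterm j)) hE
  rw [hfinal]
  congr 1
  have htail : (∑ i ∈ Finset.range k, tp l r i) + (∑' i : ℕ, tp l r (i + k)) = S :=
    Summable.sum_add_tsum_nat_add k hsum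
  have hxpk : xp l r k = ∑ i ∈ Finset.range k, tp l r i := rfl
  have hcomm : (∑' i : ℕ, tp l r (k + i)) = ∑' i : ℕ, tp l r (i + k) :=
    tsum_congr fun i => by rw [add_comm]
  rw [hcomm]
  have : (∑' i : ℕ, tp l r (i + k)) = S - xp l r k := by rw [hxpk]; linarith
  rw [this, sub_div, div_self (ne_of_gt hS0)]
end
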